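/- arXiv:1505.07536 — 5 statements merged into one kernel-verified Lean document; each statement's English description precedes it below -/
import Mathlib

section
/- A self-adjoint discrete Sturm-Liouville problem (ω, A) with N≥2 has exactly N-2+r eigenvalues counted with multiplicity, where r is the rank of the 2×2 matrix [[-a_{11}+f_0 a_{12}, b_{12}],[-a_{21}+f_0 a_{22}, b_{22}]]. -/
open Polynomial Matrix

/-- The solution of the discrete Sturm–Liouville equation
`-∇(fₙ Δyₙ) + qₙ yₙ = λ wₙ yₙ` (`n ≥ 1`) with initial data `y₀`, `f₀Δy₀ = d₀`,
regarded as a sequence of polynomials in the spectral parameter `λ`. -/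
noncomputable def slSol (f q w : ℕ → ℝ) (y0 d0 : ℂ) : ℕ → Polynomial ℂ
  | 0 => C y0
  | 1 => C (y0 + d0 / (f 0 : ℂ))
  | n + 2 =>
      slSol f q w y0 d0 (n + 1) + C ((f (n + 1) : ℂ))⁻¹ *
        (C ((f n : ℂ)) * (slSol f q w y0 d0 (n + 1) - slSol f q w y0 d0 n)
          + C ((q (n + 1) : ℂ)) * slSol f q w y0 d0 (n + 1)
          - X * C ((w (n + 1) : ℂ)) * slSol f q w y0 d0 (n + 1))

/-- The characteristic polynomial
`Γ(λ) = det A + det B + c₁₁ φ_N(λ) + c₁₂ ψ_N(λ) + c₂₁ f_NΔφ_N(λ) + c₂₂ f_NΔψ_N(λ)`,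
where `φ, ψ` are the fundamental solutions with initial data `(1,0)` and `(0,1)`, and
`C = [[b₁₁,b₂₁],[b₁₂,b₂₂]]·[[a₂₂,-a₂₁],[-a₁₂,a₁₁]]`. Its zeros are the eigenvalues of the
problem, counted with multiplicity. -/
noncomputable def slCharPoly (N : ℕ) (f q w : ℕ → ℝ)
    (A B : Matrix (Fin 2) (Fin 2) ℂ) : Polynomial ℂ :=
  let φ := slSol f q w 1 0
  let ψ := slSol f q w 0 1
  let c11 := B 0 0 * A 1 1 - B 1 0 * A 0 1
  let c12 := -(B 0 0) * A 1 0 + B 1 0 * A 0 0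
  let c21 := B 0 1 * A 1 1 - B 1 1 * A 0 1
  let c22 := -(B 0 1) * A 1 0 + B 1 1 * A 0 0
  C (A.det + B.det) + C c11 * φ N + C c12 * ψ N
    + C (c21 * (f N : ℂ)) * (φ (N + 1) - φ N)
    + C (c22 * (f N : ℂ)) * (ψ (N + 1) - ψ N)

/-- The augmented `2×4` coefficient matrix `(A, B)` of the boundary condition. -/
def slAugment (A B : Matrix (Fin 2) (Fin 2) ℂ) : Matrix (Fin 2) (Fin 4) ℂ :=
  Matrix.of fun i j =>
    if h : (j : ℕ) < 2 then A i ⟨j, h⟩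
    else B i ⟨(j : ℕ) - 2, by have := j.isLt; omega⟩

private lemma slRec_natDegree_le (p p' : Polynomial ℂ) (k : ℕ) (hp : p.natDegree ≤ k)
    (hp' : p'.natDegree ≤ k) (a b c d : ℂ) :
    (p + C a * (C b * (p - p') + C c * p - X * C d * p)).natDegree ≤ k + 1 := by
  have h1 : (C b * (p - p')).natDegree ≤ k := by
    refine le_trans (natDegree_mul_le) ?_
    simpa [natDegree_C] using le_trans (natDegree_sub_le _ _) (max_le hp hp')
  have h2 : (C c * p).natDegree ≤ k := le_trans (natDegree_mul_le) (by rw [natDegree_C, Nat.zero_add]; exact hp)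
  have h3 : (X * C d * p).natDegree ≤ k + 1 := by
    refine le_trans (natDegree_mul_le) ?_
    have : (X * C d : Polynomial ℂ).natDegree ≤ 1 :=
      le_trans natDegree_mul_le (by simp [natDegree_C, natDegree_X])
    omega
  have h4 : (C b * (p - p') + C c * p - X * C d * p).natDegree ≤ k + 1 := by
    refine le_trans (natDegree_sub_le _ _) (max_le ?_ h3)
    exact le_trans (natDegree_add_le _ _) (by omega)
  refine le_trans (natDegree_add_le _ _) (max_le (by omega) ?_)
  refine le_trans natDegree_mul_le ?_
  rw [natDegree_C, Nat.zero_add]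
  exact h4

private lemma slRec_coeff (p p' : Polynomial ℂ) (k : ℕ) (hp : p.natDegree ≤ k)
    (hp' : p'.natDegree ≤ k) (a b c d : ℂ) :
    (p + C a * (C b * (p - p') + C c * p - X * C d * p)).coeff (k + 1)
      = a * (-d) * p.coeff k := by
  have e1 : p.coeff (k + 1) = 0 :=
    coeff_eq_zero_of_natDegree_lt (lt_of_le_of_lt hp (Nat.lt_succ_self k))
  have e2 : p'.coeff (k + 1) = 0 :=
    coeff_eq_zero_of_natDegree_lt (lt_of_le_of_lt hp' (Nat.lt_succ_self k))
  have e3 : (X * C d * p).coeff (k + 1) = d * p.coeff k := by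
    have : X * C d * p = C d * (X * p) := by ring
    rw [this, coeff_C_mul, coeff_X_mul]
  simp only [coeff_add, coeff_sub, coeff_C_mul, e1, e2, e3]
  ring

private lemma slSeq_growth (f q w : ℕ → ℝ) (y : ℕ → Polynomial ℂ)
    (hrec : ∀ n, y (n + 2) = y (n + 1) + C ((f (n + 1) : ℂ))⁻¹ *
        (C ((f n : ℂ)) * (y (n + 1) - y n) + C ((q (n + 1) : ℂ)) * y (n + 1)
          - X * C ((w (n + 1) : ℂ)) * y (n + 1)))
    (m : ℕ) (L : ℂ) (h0 : (y m).natDegree ≤ 0) (h1 : (y (m + 1)).natDegree ≤ 0)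
    (hL : (y (m + 1)).coeff 0 = L) :
    ∀ k, (y (m + k)).natDegree ≤ k ∧ (y (m + 1 + k)).natDegree ≤ k ∧
      (y (m + 1 + k)).coeff k
        = L * ∏ j ∈ Finset.range k, (-(w (m + 1 + j) : ℂ) / (f (m + 1 + j) : ℂ)) := by
  intro k
  induction k with
  | zero =>
    simp only [Nat.add_zero, Finset.range_zero, Finset.prod_empty, mul_one]
    exact ⟨h0, h1, hL⟩
  | succ k ih =>
    obtain ⟨d1, d2, hc⟩ := ih
    have e1 : m + (k + 1) = m + 1 + k := by omega
    have e2 : m + 1 + (k + 1) = m + k + 2 := by omega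
    have e3 : m + k + 1 = m + 1 + k := by omega
    refine ⟨by rw [e1]; omega, ?_, ?_⟩
    · rw [e2, hrec (m + k), e3]
      exact slRec_natDegree_le _ _ k d2 (d1.trans (by omega)) _ _ _ _
    · rw [e2, hrec (m + k), e3, slRec_coeff _ _ k d2 (d1.trans (by omega)), hc,
        Finset.prod_range_succ]
      rw [show m + 1 + k = m + k + 1 from by omega]
      field_simp

private noncomputable def slDelta (f q w : ℕ → ℝ) (k : ℕ) : Polynomial ℂ :=
  slSol f q w 0 1 k - C ((f 0 : ℂ))⁻¹ * slSol f q w 1 0 k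

private lemma slDelta_rec (f q w : ℕ → ℝ) (n : ℕ) :
    slDelta f q w (n + 2) = slDelta f q w (n + 1) + C ((f (n + 1) : ℂ))⁻¹ *
        (C ((f n : ℂ)) * (slDelta f q w (n + 1) - slDelta f q w n)
          + C ((q (n + 1) : ℂ)) * slDelta f q w (n + 1)
          - X * C ((w (n + 1) : ℂ)) * slDelta f q w (n + 1)) := by
  unfold slDelta
  simp only [slSol]
  ring

private lemma slDelta_one (f q w : ℕ → ℝ) : slDelta f q w 1 = 0 := by
  unfold slDelta
  simp only [slSol]
  rw [zero_div, add_zero, zero_add, ← Polynomial.C_mul]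
  rw [mul_one, ← map_sub]
  rw [one_div, sub_self, map_zero]

private lemma slDelta_two (f q w : ℕ → ℝ) (hf0 : (f 0 : ℂ) ≠ 0) :
    slDelta f q w 2 = C ((f 1 : ℂ))⁻¹ := by
  have h := slDelta_rec f q w 0
  rw [slDelta_one] at h
  have h0 : slDelta f q w 0 = - C ((f 0 : ℂ))⁻¹ := by
    unfold slDelta
    simp only [slSol]
    simp
  rw [h0] at h
  rw [show (2:ℕ) = 0 + 2 from rfl, h]
  rw [zero_add, mul_zero, zero_sub, neg_neg, zero_add, mul_zero, sub_zero, add_zero,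
    ← Polynomial.C_mul, ← Polynomial.C_mul]
  congr 1
  field_simp

private lemma rank_le_one_of_span {n : ℕ} (M : Matrix (Fin 2) (Fin n) ℂ) (c : Fin 2 → ℂ)
    (h : ∀ j, ∃ k : ℂ, ∀ i, M i j = k * c i) : M.rank ≤ 1 := by
  have hle : LinearMap.range M.mulVecLin ≤ Submodule.span ℂ {c} := by
    rw [Matrix.range_mulVecLin, Submodule.span_le]
    rintro x ⟨j, rfl⟩
    obtain ⟨k, hk⟩ := h j
    refine Submodule.mem_span_singleton.2 ⟨k, ?_⟩
    funext i
    simp [Matrix.transpose_apply, hk i]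
  have h2 : M.rank ≤ Module.finrank ℂ (Submodule.span ℂ ({c} : Set (Fin 2 → ℂ))) :=
    Submodule.finrank_mono hle
  refine le_trans h2 ?_
  by_cases hc : c = 0
  · subst hc
    rw [Submodule.span_zero_singleton]
    simp
  · rw [finrank_span_singleton hc]

private lemma one_le_rank {m n : Type*} [Fintype m] [Fintype n] (M : Matrix m n ℂ)
    (i : m) (j : n) (h : M i j ≠ 0) : 1 ≤ M.rank := by
  by_contra hr
  have h0 : M.rank = 0 := by omega
  rw [Matrix.rank, Submodule.finrank_eq_zero] at h0
  have : Mᵀ j ∈ LinearMap.range M.mulVecLin := by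
    rw [Matrix.range_mulVecLin]
    exact Submodule.subset_span ⟨j, rfl⟩
  rw [h0] at this
  exact h (by simpa using congrFun this i)

private lemma rank_two_of_det {M : Matrix (Fin 2) (Fin 2) ℂ} (h : M.det ≠ 0) : M.rank = 2 :=
  (Matrix.rank_of_isUnit M ((Matrix.isUnit_iff_isUnit_det M).2 h.isUnit)).trans (by simp)

open ComplexConjugate in
/-- Structure of self-adjoint boundary conditions in the degenerate case. -/
private lemma slStruct (a12 a22 b11 b21 b12 b22 m1 m2 : ℂ)
    (hz : b12 ≠ 0 ∨ b22 ≠ 0)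
    (hdM : m1 * b22 = m2 * b12)
    (h00 : a12 * conj m1 - m1 * conj a12 = b11 * conj b12 - b12 * conj b11)
    (h01 : a12 * conj m2 - m1 * conj a22 = b11 * conj b22 - b12 * conj b21)
    (h10 : a22 * conj m1 - m2 * conj a12 = b21 * conj b12 - b22 * conj b11) :
    ∃ t ρ : ℂ, m1 = t * b12 ∧ m2 = t * b22 ∧
      b11 = conj t * a12 - ρ * b12 ∧ b21 = conj t * a22 - ρ * b22 := by
  rcases ne_or_eq b12 0 with hb12 | hb12
  · have hb12c : conj b12 ≠ 0 := by simpa using hb12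
    obtain ⟨t, hm1, hm2⟩ : ∃ t, m1 = t * b12 ∧ m2 = t * b22 :=
      ⟨m1 / b12, by field_simp, by field_simp; linear_combination (-1 : ℂ) * hdM⟩
    subst hm1
    subst hm2
    simp only [_root_.map_mul] at h00 h01
    have e1 : (conj t * a12 - b11) * conj b12 = b12 * (t * conj a12 - conj b11) := by
      linear_combination h00
    have e2 : (conj t * a12 - b11) * conj b22 = b12 * (t * conj a22 - conj b21) := by
      linear_combination h01
    refine ⟨t, (conj t * a12 - b11) / b12, rfl, rfl, by field_simp; ring, ?_⟩
    have h := congrArg (starRingEnd ℂ) e2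
    simp only [_root_.map_mul, map_sub, Complex.conj_conj] at h
    -- h : (t * conj a12 - conj b11) * b22 = conj b12 * (conj t * a22 - b21)
    have h3 : ((conj t * a12 - b11) * b22) * conj b12
        = (b12 * (conj t * a22 - b21)) * conj b12 := by
      linear_combination b22 * e1 + b12 * h
    have h4 := mul_right_cancel₀ hb12c h3
    field_simp
    linear_combination h4
  · rcases hz with h | hb22
    · exact absurd hb12 h
    obtain ⟨t, hm2⟩ : ∃ t, m2 = t * b22 := ⟨m2 / b22, by field_simp⟩
    have hm10 : m1 = 0 := by
      have h5 := hdM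
      rw [hb12, mul_zero] at h5
      exact (mul_eq_zero.1 h5).resolve_right hb22
    refine ⟨t, (conj t * a22 - b21) / b22, by rw [hm10, hb12, mul_zero], hm2, ?_, by field_simp; ring⟩
    rw [hb12, mul_zero, sub_zero]
    rw [hm10, hm2, hb12] at h10
    simp only [map_zero, mul_zero, zero_mul, zero_sub, _root_.map_mul] at h10
    have h' : conj b11 = t * conj a12 := by
      refine mul_left_cancel₀ hb22 ?_
      linear_combination h10
    have h6 := congrArg (starRingEnd ℂ) h'
    simp only [_root_.map_mul, Complex.conj_conj] at h6
    exact h6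

private lemma nd_C (a : ℂ) (k : ℕ) : (C a).natDegree ≤ k := by
  rw [natDegree_C]; omega

private lemma nd_Cmul (a : ℂ) (p : Polynomial ℂ) (k : ℕ) (h : p.natDegree ≤ k) :
    (C a * p).natDegree ≤ k :=
  le_trans natDegree_mul_le (by rw [natDegree_C, Nat.zero_add]; exact h)

private lemma nd_Cmul_sub (a : ℂ) (p q : Polynomial ℂ) (k : ℕ) (hp : p.natDegree ≤ k)
    (hq : q.natDegree ≤ k) : (C a * (p - q)).natDegree ≤ k :=
  nd_Cmul _ _ _ (le_trans (natDegree_sub_le _ _) (max_le hp hq))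

open ComplexConjugate in
/-- A self-adjoint discrete Sturm–Liouville problem `(ω, A|B)` with `N ≥ 2` has exactly
`N - 2 + r` eigenvalues counted with multiplicity, where
`r = rank [[-a₁₁ + f₀a₁₂, b₁₂],[-a₂₁ + f₀a₂₂, b₂₂]]`. -/
theorem eigenvalue_count (N : ℕ) (hN : 2 ≤ N) (f q w : ℕ → ℝ)
    (hf : ∀ n ≤ N, f n ≠ 0) (hw : ∀ n, 1 ≤ n → n ≤ N → 0 < w n)
    (A B : Matrix (Fin 2) (Fin 2) ℂ)
    (hrank : (slAugment A B).rank = 2)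
    (hsa : A * (!![0, 1; -1, 0] : Matrix (Fin 2) (Fin 2) ℂ) * Aᴴ
        = B * (!![0, 1; -1, 0] : Matrix (Fin 2) (Fin 2) ℂ) * Bᴴ) :
    slCharPoly N f q w A B ≠ 0 ∧
    Multiset.card (slCharPoly N f q w A B).roots =
      N - 2 + (!![-(A 0 0) + (f 0 : ℂ) * A 0 1, B 0 1;
                  -(A 1 0) + (f 0 : ℂ) * A 1 1, B 1 1] : Matrix (Fin 2) (Fin 2) ℂ).rank := by

  obtain ⟨n, rfl⟩ : ∃ n, N = n + 2 := ⟨N - 2, by omega⟩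
  have hf0R : f 0 ≠ 0 := hf 0 (by omega)
  have hf0 : (f 0 : ℂ) ≠ 0 := by exact_mod_cast hf0R
  have hf1 : (f 1 : ℂ) ≠ 0 := by exact_mod_cast hf 1 (by omega)
  have hfNR : f (n + 2) ≠ 0 := hf (n + 2) le_rfl
  have hfN : (f (n + 2) : ℂ) ≠ 0 := by exact_mod_cast hfNR
  have hw1R : 0 < w 1 := hw 1 le_rfl (by omega)
  have hw1 : (w 1 : ℂ) ≠ 0 := by exact_mod_cast ne_of_gt hw1R
  have hwNR : 0 < w (n + 2) := hw (n + 2) (by omega) le_rfl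
  have hwN : (w (n + 2) : ℂ) ≠ 0 := by exact_mod_cast ne_of_gt hwNR
  -- growth facts for φ
  have Gφ := slSeq_growth f q w (slSol f q w 1 0) (fun k => rfl) 0 1
    (by show (C (1:ℂ)).natDegree ≤ 0; rw [natDegree_C])
    (by show (C ((1:ℂ) + 0 / (f 0 : ℂ))).natDegree ≤ 0; rw [natDegree_C])
    (by show (C ((1:ℂ) + 0 / (f 0 : ℂ))).coeff 0 = 1; rw [coeff_C_zero]; simp)
  have Gδ := slSeq_growth f q w (slDelta f q w) (slDelta_rec f q w) 1 ((f 1 : ℂ))⁻¹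
    (by rw [slDelta_one]; simp)
    (by show (slDelta f q w 2).natDegree ≤ 0; rw [slDelta_two f q w hf0, natDegree_C])
    (by show (slDelta f q w 2).coeff 0 = _; rw [slDelta_two f q w hf0, coeff_C_zero])
  set P : ℕ → ℂ := fun k => ∏ j ∈ Finset.range k, (-(w (j + 1) : ℂ) / (f (j + 1) : ℂ)) with hP
  set D : ℕ → ℂ := fun k => ∏ j ∈ Finset.range k, (-(w (j + 2) : ℂ) / (f (j + 2) : ℂ)) with hD
  have hφdeg : ∀ k, (slSol f q w 1 0 (k + 1)).natDegree ≤ k := by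
    intro k
    have h := (Gφ k).2.1
    rwa [show 0 + 1 + k = k + 1 from by omega] at h
  have hφco : ∀ k, (slSol f q w 1 0 (k + 1)).coeff k = P k := by
    intro k
    have h := (Gφ k).2.2
    rw [show 0 + 1 + k = k + 1 from by omega] at h
    rw [h, one_mul, hP]
    exact Finset.prod_congr rfl fun j _ => by rw [show 0 + 1 + j = j + 1 from by omega]
  have hδdeg : ∀ k, (slDelta f q w (k + 2)).natDegree ≤ k := by
    intro k
    have h := (Gδ k).2.1
    rwa [show 1 + 1 + k = k + 2 from by omega] at h
  have hδco : ∀ k, (slDelta f q w (k + 2)).coeff k = (f 1 : ℂ)⁻¹ * D k := by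
    intro k
    have h := (Gδ k).2.2
    rw [show 1 + 1 + k = k + 2 from by omega] at h
    rw [h, hD]
    congr 1
    exact Finset.prod_congr rfl fun j _ => by rw [show 1 + 1 + j = j + 2 from by omega]
  have hPne : ∀ k, k ≤ n + 2 → P k ≠ 0 := by
    intro k hk
    rw [hP]
    refine Finset.prod_ne_zero_iff.2 fun j hj => ?_
    have hj' := Finset.mem_range.1 hj
    refine div_ne_zero (neg_ne_zero.2 ?_) ?_
    · exact_mod_cast ne_of_gt (hw (j + 1) (by omega) (by omega))
    · exact_mod_cast hf (j + 1) (by omega)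
  have hDne : ∀ k, k ≤ n + 1 → D k ≠ 0 := by
    intro k hk
    rw [hD]
    refine Finset.prod_ne_zero_iff.2 fun j hj => ?_
    have hj' := Finset.mem_range.1 hj
    refine div_ne_zero (neg_ne_zero.2 ?_) ?_
    · exact_mod_cast ne_of_gt (hw (j + 2) (by omega) (by omega))
    · exact_mod_cast hf (j + 2) (by omega)
  -- clean-index degree and coefficient facts
  have dφ2 : (slSol f q w 1 0 (n + 2)).natDegree ≤ n + 1 := by
    have := hφdeg (n + 1); rwa [show n + 1 + 1 = n + 2 from by omega] at this
  have dφ3 : (slSol f q w 1 0 (n + 3)).natDegree ≤ n + 2 := by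
    have := hφdeg (n + 2); rwa [show n + 2 + 1 = n + 3 from by omega] at this
  have cφ2 : (slSol f q w 1 0 (n + 2)).coeff (n + 1) = P (n + 1) := by
    have := hφco (n + 1); rwa [show n + 1 + 1 = n + 2 from by omega] at this
  have cφ3 : (slSol f q w 1 0 (n + 3)).coeff (n + 2) = P (n + 2) := by
    have := hφco (n + 2); rwa [show n + 2 + 1 = n + 3 from by omega] at this
  have dδ2 : (slDelta f q w (n + 2)).natDegree ≤ n := hδdeg n
  have dδ3 : (slDelta f q w (n + 3)).natDegree ≤ n + 1 := by
    have := hδdeg (n + 1); rwa [show n + 1 + 2 = n + 3 from by omega] at this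
  have cδ2 : (slDelta f q w (n + 2)).coeff n = (f 1 : ℂ)⁻¹ * D n := hδco n
  have cδ3 : (slDelta f q w (n + 3)).coeff (n + 1) = (f 1 : ℂ)⁻¹ * D (n + 1) := by
    have := hδco (n + 1); rwa [show n + 1 + 2 = n + 3 from by omega] at this
  -- scalar abbreviations
  set m1 : ℂ := -(A 0 0) + (f 0 : ℂ) * A 0 1 with hm1
  set m2 : ℂ := -(A 1 0) + (f 0 : ℂ) * A 1 1 with hm2
  set c11 : ℂ := B 0 0 * A 1 1 - B 1 0 * A 0 1 with hc11
  set c12 : ℂ := -(B 0 0) * A 1 0 + B 1 0 * A 0 0 with hc12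
  set c21 : ℂ := B 0 1 * A 1 1 - B 1 1 * A 0 1 with hc21
  set c22 : ℂ := -(B 0 1) * A 1 0 + B 1 1 * A 0 0 with hc22
  set v : ℂ := c11 + c12 * (f 0 : ℂ)⁻¹ with hv
  set u : ℂ := c21 + c22 * (f 0 : ℂ)⁻¹ with hu
  set K0 : ℂ := A.det + B.det with hK0def
  -- self-adjointness, entrywise
  have hSA : ∀ i j : Fin 2,
      A i 1 * conj (-(A j 0) + (f 0 : ℂ) * A j 1)
        - (-(A i 0) + (f 0 : ℂ) * A i 1) * conj (A j 1)
      = B i 0 * conj (B j 1) - B i 1 * conj (B j 0) := by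
    intro i j
    have h := congrFun (congrFun hsa i) j
    simp [Matrix.mul_apply, Fin.sum_univ_two, Matrix.conjTranspose_apply,
      Complex.star_def] at h
    simp only [map_add, map_neg, _root_.map_mul, Complex.conj_ofReal]
    linear_combination h
  -- rank ≤ 1 criterion for the augmented matrix
  have hcols : ∀ (c : Fin 2 → ℂ) (k0 k1 k2 k3 : ℂ),
      (∀ i, A i 0 = k0 * c i) → (∀ i, A i 1 = k1 * c i) → (∀ i, B i 0 = k2 * c i) →
      (∀ i, B i 1 = k3 * c i) → False := by
    intro c k0 k1 k2 k3 h0 h1 h2 h3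
    have hle : (slAugment A B).rank ≤ 1 := by
      refine rank_le_one_of_span _ c ?_
      intro j
      fin_cases j
      · exact ⟨k0, fun i => by simpa [slAugment] using h0 i⟩
      · exact ⟨k1, fun i => by simpa [slAugment] using h1 i⟩
      · exact ⟨k2, fun i => by simpa [slAugment] using h2 i⟩
      · exact ⟨k3, fun i => by simpa [slAugment] using h3 i⟩
    rw [hrank] at hle
    omega
  -- decomposition of the characteristic polynomial
  have hΓ : slCharPoly (n + 2) f q w A B
      = C K0 + C v * slSol f q w 1 0 (n + 2) + C c12 * slDelta f q w (n + 2)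
        + C (u * (f (n + 2) : ℂ)) * (slSol f q w 1 0 (n + 3) - slSol f q w 1 0 (n + 2))
        + C (c22 * (f (n + 2) : ℂ)) * (slDelta f q w (n + 3) - slDelta f q w (n + 2)) := by
    have h0 : slCharPoly (n + 2) f q w A B
        = C K0 + C c11 * slSol f q w 1 0 (n + 2) + C c12 * slSol f q w 0 1 (n + 2)
          + C (c21 * (f (n + 2) : ℂ)) * (slSol f q w 1 0 (n + 3) - slSol f q w 1 0 (n + 2))
          + C (c22 * (f (n + 2) : ℂ))
              * (slSol f q w 0 1 (n + 3) - slSol f q w 0 1 (n + 2)) := rfl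
    have hψ : ∀ k, slSol f q w 0 1 k
        = C (((f 0 : ℂ))⁻¹) * slSol f q w 1 0 k + slDelta f q w k := fun k => by
      unfold slDelta; ring
    rw [h0, hψ, hψ, hv, hu]
    simp only [Polynomial.C_add, Polynomial.C_mul, Polynomial.C_neg]
    ring
  have hfu : (f 0 : ℂ) * u = B 0 1 * m2 - B 1 1 * m1 := by
    rw [hu, hc21, hc22, hm1, hm2]
    field_simp
    ring
  have hfv : (f 0 : ℂ) * v = B 0 0 * m2 - B 1 0 * m1 := by
    rw [hv, hc11, hc12, hm1, hm2]
    field_simp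
    ring
  have hcard : ∀ p : Polynomial ℂ, Multiset.card p.roots = p.natDegree := fun p =>
    IsAlgClosed.card_roots_eq_natDegree
  by_cases hdet : m1 * B 1 1 - B 0 1 * m2 = 0
  · -- degenerate top coefficient: rank ≤ 1 for M
    have hu0 : u = 0 := by
      have h1 : (f 0 : ℂ) * u = 0 := by rw [hfu]; linear_combination -hdet
      exact (mul_eq_zero.1 h1).resolve_left hf0
    have hΓ' : slCharPoly (n + 2) f q w A B
        = C K0 + C v * slSol f q w 1 0 (n + 2) + C c12 * slDelta f q w (n + 2)
          + C (c22 * (f (n + 2) : ℂ)) * (slDelta f q w (n + 3) - slDelta f q w (n + 2)) := by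
      rw [hΓ, hu0]
      simp
    -- shared tail for the rank-one cases
    have tail : ((w 1 : ℂ) * v + (w (n + 2) : ℂ) * c22 ≠ 0) →
        ((!![m1, B 0 1; m2, B 1 1] : Matrix (Fin 2) (Fin 2) ℂ).rank = 1) →
        slCharPoly (n + 2) f q w A B ≠ 0 ∧
        Multiset.card (slCharPoly (n + 2) f q w A B).roots =
          n + 2 - 2 + (!![m1, B 0 1; m2, B 1 1] : Matrix (Fin 2) (Fin 2) ℂ).rank := by
      intro hkey hrkM
      have hL : (∏ j ∈ Finset.range (n + 1), (-(w (j + 2) : ℂ) / (f (j + 2) : ℂ)))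
          * (-(w 1 : ℂ) / (f 1 : ℂ))
          = ∏ j ∈ Finset.range (n + 2), (-(w (j + 1) : ℂ) / (f (j + 1) : ℂ)) := by
        rw [Finset.prod_range_succ' (fun j => (-(w (j + 1) : ℂ) / (f (j + 1) : ℂ))) (n + 1)]
      have hR : (∏ j ∈ Finset.range (n + 2), (-(w (j + 1) : ℂ) / (f (j + 1) : ℂ)))
          = P (n + 1) * (-(w (n + 2) : ℂ) / (f (n + 2) : ℂ)) := by
        rw [Finset.prod_range_succ, hP, show n + 1 + 1 = n + 2 from by omega]
      have hsplit : D (n + 1) * (-(w 1 : ℂ) / (f 1 : ℂ))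
          = P (n + 1) * (-(w (n + 2) : ℂ) / (f (n + 2) : ℂ)) := by
        rw [hD, hL, hR]
      have hProd : (f (n + 2) : ℂ) * ((f 1 : ℂ)⁻¹ * D (n + 1)) * (w 1 : ℂ)
          = (w (n + 2) : ℂ) * P (n + 1) := by
        field_simp at hsplit ⊢
        linear_combination -hsplit
      have hco : (slCharPoly (n + 2) f q w A B).coeff (n + 1)
          = v * P (n + 1) + c22 * (f (n + 2) : ℂ) * ((f 1 : ℂ)⁻¹ * D (n + 1)) := by
        rw [hΓ']
        simp only [coeff_add, coeff_sub, coeff_C_mul]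
        rw [coeff_C, if_neg (by omega : ¬(n + 1 = 0)), cφ2, cδ3,
          coeff_eq_zero_of_natDegree_lt (lt_of_le_of_lt dδ2 (by omega))]
        ring
      have hcoeq : (slCharPoly (n + 2) f q w A B).coeff (n + 1) * (w 1 : ℂ)
          = P (n + 1) * ((w 1 : ℂ) * v + (w (n + 2) : ℂ) * c22) := by
        rw [hco]
        linear_combination c22 * hProd
      have hcne : (slCharPoly (n + 2) f q w A B).coeff (n + 1) ≠ 0 := by
        intro h0
        rw [h0, zero_mul] at hcoeq
        exact mul_ne_zero (hPne (n + 1) (by omega)) hkey hcoeq.symm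
      have hdegle : (slCharPoly (n + 2) f q w A B).natDegree ≤ n + 1 := by
        rw [hΓ']
        refine natDegree_add_le_of_degree_le (natDegree_add_le_of_degree_le
          (natDegree_add_le_of_degree_le (nd_C _ _) (nd_Cmul _ _ _ dφ2))
          (nd_Cmul _ _ _ (dδ2.trans (by omega)))) (nd_Cmul_sub _ _ _ _ dδ3 (dδ2.trans (by omega)))
      have hne0 : slCharPoly (n + 2) f q w A B ≠ 0 := fun h => hcne (by rw [h, coeff_zero])
      refine ⟨hne0, ?_⟩
      rw [hcard _, le_antisymm hdegle (le_natDegree_of_ne_zero hcne), hrkM]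
      omega
    by_cases hb2 : B 0 1 = 0 ∧ B 1 1 = 0
    · have hc220 : c22 = 0 := by rw [hc22, hb2.1, hb2.2]; ring
      by_cases hm0 : m1 = 0 ∧ m2 = 0
      · -- rank 0 case
        have hA0 : ∀ i : Fin 2, A i 0 = (f 0 : ℂ) * A i 1 := by
          rw [Fin.forall_fin_two]
          constructor
          · have h := hm0.1; rw [hm1] at h; linear_combination -h
          · have h := hm0.2; rw [hm2] at h; linear_combination -h
        have hc12ne : c12 ≠ 0 := by
          intro hc0
          rw [hc12] at hc0
          rw [hA0 0, hA0 1] at hc0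
          have hrel : B 1 0 * A 0 1 = B 0 0 * A 1 1 := by
            apply mul_left_cancel₀ hf0
            linear_combination hc0
          rcases ne_or_eq (A 0 1) 0 with ha | ha
          · refine hcols (fun i => A i 1) (f 0 : ℂ) 1 (B 0 0 / A 0 1) 0 hA0
              (fun i => (one_mul _).symm) ?_
              (Fin.forall_fin_two.2 ⟨by simp [hb2.1], by simp [hb2.2]⟩)
            refine Fin.forall_fin_two.2 ⟨?_, ?_⟩
            · show B 0 0 = B 0 0 / A 0 1 * A 0 1
              field_simp
            · show B 1 0 = B 0 0 / A 0 1 * A 1 1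
              field_simp
              linear_combination hrel
          · rcases ne_or_eq (A 1 1) 0 with ha' | ha'
            · refine hcols (fun i => A i 1) (f 0 : ℂ) 1 (B 1 0 / A 1 1) 0 hA0
                (fun i => (one_mul _).symm) ?_
                (Fin.forall_fin_two.2 ⟨by simp [hb2.1], by simp [hb2.2]⟩)
              refine Fin.forall_fin_two.2 ⟨?_, ?_⟩
              · show B 0 0 = B 1 0 / A 1 1 * A 0 1
                field_simp
                linear_combination -hrel
              · show B 1 0 = B 1 0 / A 1 1 * A 1 1
                field_simp
            · refine hcols (fun i => B i 0) 0 0 1 0 ?_ ?_ (fun i => (one_mul _).symm)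
                (Fin.forall_fin_two.2 ⟨by simp [hb2.1], by simp [hb2.2]⟩)
              · exact Fin.forall_fin_two.2 ⟨by rw [hA0 0, ha]; ring, by rw [hA0 1, ha']; ring⟩
              · exact Fin.forall_fin_two.2 ⟨by rw [ha]; ring, by rw [ha']; ring⟩
        have hK00 : K0 = 0 := by
          rw [hK0def, Matrix.det_fin_two, Matrix.det_fin_two, hA0 0, hA0 1, hb2.1, hb2.2]
          ring
        have hv0 : v = 0 := by
          have h1 : (f 0 : ℂ) * v = 0 := by rw [hfv, hm0.1, hm0.2]; ring
          exact (mul_eq_zero.1 h1).resolve_left hf0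
        have hΓ'' : slCharPoly (n + 2) f q w A B = C c12 * slDelta f q w (n + 2) := by
          rw [hΓ, hu0, hv0, hK00, hc220]
          simp
        have hco : (slCharPoly (n + 2) f q w A B).coeff n
            = c12 * ((f 1 : ℂ)⁻¹ * D n) := by rw [hΓ'', coeff_C_mul, cδ2]
        have hcne : (slCharPoly (n + 2) f q w A B).coeff n ≠ 0 := by
          rw [hco]
          exact mul_ne_zero hc12ne (mul_ne_zero (inv_ne_zero hf1) (hDne n (by omega)))
        have hdegle : (slCharPoly (n + 2) f q w A B).natDegree ≤ n := by
          rw [hΓ'']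
          exact nd_Cmul _ _ _ dδ2
        have hne0 : slCharPoly (n + 2) f q w A B ≠ 0 := fun h => hcne (by rw [h, coeff_zero])
        have hM0 : (!![m1, B 0 1; m2, B 1 1] : Matrix (Fin 2) (Fin 2) ℂ) = 0 := by
          ext i j
          fin_cases i <;> fin_cases j <;> simp [hm0.1, hm0.2, hb2.1, hb2.2]
        refine ⟨hne0, ?_⟩
        rw [hcard _, le_antisymm hdegle (le_natDegree_of_ne_zero hcne), hM0,
          Matrix.rank_zero]
        omega
      · -- rank 1, second boundary column vanishes
        rw [not_and_or] at hm0
        have hSA0 : ∀ i j : Fin 2,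
            A i 1 * conj (-(A j 0) + (f 0 : ℂ) * A j 1)
              = (-(A i 0) + (f 0 : ℂ) * A i 1) * conj (A j 1) := by
          intro i j
          have h := hSA i j
          have hz : B i 0 * conj (B j 1) - B i 1 * conj (B j 0) = 0 := by
            fin_cases i <;> fin_cases j <;> simp [hb2.1, hb2.2]
          rw [hz] at h
          linear_combination h
        have hmv : ∀ i : Fin 2, -(A i 0) + (f 0 : ℂ) * A i 1 = ![m1, m2] i := by
          intro i
          fin_cases i
          · rw [hm1]; rfl
          · rw [hm2]; rfl
        have hvne : v ≠ 0 := by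
          intro hv0
          have hfv0 : B 0 0 * m2 - B 1 0 * m1 = 0 := by rw [← hfv, hv0, mul_zero]
          rcases hm0 with hm | hm
          · have hmc : conj m1 ≠ 0 := by simpa using hm
            have h00 := hSA0 0 0
            have h10 := hSA0 1 0
            rw [← hm1] at h00
            rw [← hm1, ← hm2] at h10
            have hA1a : A 0 1 = conj (A 0 1) / conj m1 * m1 := by
              field_simp
              linear_combination h00
            have hA1b : A 1 1 = conj (A 0 1) / conj m1 * m2 := by
              field_simp
              linear_combination h10
            have hA0a : A 0 0 = ((f 0 : ℂ) * (conj (A 0 1) / conj m1) - 1) * m1 := by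
              linear_combination hm1 + (f 0 : ℂ) * hA1a
            have hA0b : A 1 0 = ((f 0 : ℂ) * (conj (A 0 1) / conj m1) - 1) * m2 := by
              linear_combination hm2 + (f 0 : ℂ) * hA1b
            have hB0a : B 0 0 = B 0 0 / m1 * m1 := by field_simp
            have hB0b : B 1 0 = B 0 0 / m1 * m2 := by
              field_simp
              linear_combination -hfv0
            exact hcols ![m1, m2] ((f 0 : ℂ) * (conj (A 0 1) / conj m1) - 1)
              (conj (A 0 1) / conj m1) (B 0 0 / m1) 0
              (Fin.forall_fin_two.2 ⟨by simpa using hA0a, by simpa using hA0b⟩)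
              (Fin.forall_fin_two.2 ⟨by simpa using hA1a, by simpa using hA1b⟩)
              (Fin.forall_fin_two.2 ⟨by simpa using hB0a, by simpa using hB0b⟩)
              (Fin.forall_fin_two.2 ⟨by simp [hb2.1], by simp [hb2.2]⟩)
          · have hmc : conj m2 ≠ 0 := by simpa using hm
            have h01 := hSA0 0 1
            have h11 := hSA0 1 1
            rw [← hm1, ← hm2] at h01
            rw [← hm2] at h11
            have hA1a : A 0 1 = conj (A 1 1) / conj m2 * m1 := by
              field_simp
              linear_combination h01
            have hA1b : A 1 1 = conj (A 1 1) / conj m2 * m2 := by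
              field_simp
              linear_combination h11
            have hA0a : A 0 0 = ((f 0 : ℂ) * (conj (A 1 1) / conj m2) - 1) * m1 := by
              linear_combination hm1 + (f 0 : ℂ) * hA1a
            have hA0b : A 1 0 = ((f 0 : ℂ) * (conj (A 1 1) / conj m2) - 1) * m2 := by
              linear_combination hm2 + (f 0 : ℂ) * hA1b
            have hB0a : B 0 0 = B 1 0 / m2 * m1 := by
              field_simp
              linear_combination hfv0
            have hB0b : B 1 0 = B 1 0 / m2 * m2 := by field_simp
            exact hcols ![m1, m2] ((f 0 : ℂ) * (conj (A 1 1) / conj m2) - 1)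
              (conj (A 1 1) / conj m2) (B 1 0 / m2) 0
              (Fin.forall_fin_two.2 ⟨by simpa using hA0a, by simpa using hA0b⟩)
              (Fin.forall_fin_two.2 ⟨by simpa using hA1a, by simpa using hA1b⟩)
              (Fin.forall_fin_two.2 ⟨by simpa using hB0a, by simpa using hB0b⟩)
              (Fin.forall_fin_two.2 ⟨by simp [hb2.1], by simp [hb2.2]⟩)
        have hkey : (w 1 : ℂ) * v + (w (n + 2) : ℂ) * c22 ≠ 0 := by
          rw [hc220, mul_zero, add_zero]
          exact mul_ne_zero hw1 hvne
        have hrkM : (!![m1, B 0 1; m2, B 1 1] : Matrix (Fin 2) (Fin 2) ℂ).rank = 1 := by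
          refine le_antisymm ?_ ?_
          · refine rank_le_one_of_span _ ![m1, m2] ?_
            refine Fin.forall_fin_two.2 ⟨⟨1, Fin.forall_fin_two.2 ⟨by simp, by simp⟩⟩,
              ⟨0, Fin.forall_fin_two.2 ⟨by simp [hb2.1], by simp [hb2.2]⟩⟩⟩
          · rcases hm0 with hm | hm
            · exact one_le_rank _ 0 0 (by simpa using hm)
            · exact one_le_rank _ 1 0 (by simpa using hm)
        exact tail hkey hrkM
    · -- rank 1, generic case via self-adjoint structure
      rw [not_and_or] at hb2
      have hb2' : B 0 1 ≠ 0 ∨ B 1 1 ≠ 0 := hb2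
      have hdM' : m1 * B 1 1 = m2 * B 0 1 := by linear_combination hdet
      have e00 := hSA 0 0
      have e01 := hSA 0 1
      have e10 := hSA 1 0
      rw [← hm1] at e00 e01 e10
      rw [← hm2] at e01 e10
      obtain ⟨t, ρ, ht1, ht2, hb11, hb21⟩ := slStruct (A 0 1) (A 1 1) (B 0 0) (B 1 0)
        (B 0 1) (B 1 1) m1 m2 hb2' hdM' e00 e01 e10
      set d : ℂ := A 0 1 * B 1 1 - A 1 1 * B 0 1 with hd
      have hdne : d ≠ 0 := by
        intro hd0
        rw [hd] at hd0
        obtain ⟨k2, hk20, hk21⟩ : ∃ k2, A 0 1 = k2 * B 0 1 ∧ A 1 1 = k2 * B 1 1 := by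
          rcases hb2' with hb | hb
          · exact ⟨A 0 1 / B 0 1, by field_simp, by field_simp; linear_combination -hd0⟩
          · exact ⟨A 1 1 / B 1 1, by field_simp; linear_combination hd0, by field_simp⟩
        have hk2i : ∀ i : Fin 2, A i 1 = k2 * B i 1 :=
          Fin.forall_fin_two.2 ⟨hk20, hk21⟩
        refine hcols (fun i => B i 1) ((f 0 : ℂ) * k2 - t) k2 (conj t * k2 - ρ) 1
          ?_ hk2i ?_ (fun i => (one_mul _).symm)
        · refine Fin.forall_fin_two.2 ⟨?_, ?_⟩
          · linear_combination hm1 - ht1 + (f 0 : ℂ) * hk20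
          · linear_combination hm2 - ht2 + (f 0 : ℂ) * hk21
        · refine Fin.forall_fin_two.2 ⟨?_, ?_⟩
          · rw [hb11, hk20]; ring
          · rw [hb21, hk21]; ring
      have hdetE : m1 * B 1 1 - B 0 1 * m2 = 0 := hdet
      have hc22d : c22 = (f 0 : ℂ) * d := by
        rw [hc22, hd]
        rw [hm1, hm2] at hdetE
        linear_combination -hdetE
      have hnsq : ((Complex.normSq t : ℝ) : ℂ) = t * conj t := (Complex.mul_conj t).symm
      have hfv2 : (f 0 : ℂ) * v = ((Complex.normSq t : ℝ) : ℂ) * d := by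
        rw [hfv, hb11, hb21, ht1, ht2, hd, hnsq]
        ring
      have hkey : (w 1 : ℂ) * v + (w (n + 2) : ℂ) * c22 ≠ 0 := by
        intro hk
        have hE : ((w 1 * Complex.normSq t + w (n + 2) * (f 0) ^ 2 : ℝ) : ℂ) * d = 0 := by
          push_cast
          linear_combination (f 0 : ℂ) * hk - (w 1 : ℂ) * hfv2
            - (w (n + 2) : ℂ) * (f 0 : ℂ) * hc22d
        have hcoefne : ((w 1 * Complex.normSq t + w (n + 2) * (f 0) ^ 2 : ℝ) : ℂ) ≠ 0 := by
          rw [Complex.ofReal_ne_zero]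
          have h1 : 0 < w (n + 2) * (f 0) ^ 2 :=
            mul_pos hwNR (by positivity)
          have h2 : 0 ≤ w 1 * Complex.normSq t :=
            mul_nonneg hw1R.le (Complex.normSq_nonneg t)
          nlinarith
        exact hdne ((mul_eq_zero.1 hE).resolve_left hcoefne)
      have hrkM : (!![m1, B 0 1; m2, B 1 1] : Matrix (Fin 2) (Fin 2) ℂ).rank = 1 := by
        refine le_antisymm ?_ ?_
        · refine rank_le_one_of_span _ (fun i => B i 1) ?_
          refine Fin.forall_fin_two.2 ⟨⟨t, Fin.forall_fin_two.2
            ⟨by simpa using ht1, by simpa using ht2⟩⟩,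
            ⟨1, Fin.forall_fin_two.2 ⟨by simp, by simp⟩⟩⟩
        · rcases hb2' with hb | hb
          · exact one_le_rank _ 0 1 (by simpa using hb)
          · exact one_le_rank _ 1 1 (by simpa using hb)
      exact tail hkey hrkM
  · -- rank 2 case
    have hune : u ≠ 0 := by
      intro h0
      apply hdet
      rw [h0, mul_zero] at hfu
      linear_combination hfu
    have hctop : (slCharPoly (n + 2) f q w A B).coeff (n + 2)
        = u * (f (n + 2) : ℂ) * P (n + 2) := by
      rw [hΓ]
      simp only [coeff_add, coeff_sub, coeff_C_mul]
      rw [coeff_C, if_neg (by omega : ¬(n + 2 = 0)), cφ3,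
        coeff_eq_zero_of_natDegree_lt (lt_of_le_of_lt dφ2 (by omega)),
        coeff_eq_zero_of_natDegree_lt (lt_of_le_of_lt dδ2 (by omega)),
        coeff_eq_zero_of_natDegree_lt (lt_of_le_of_lt dδ3 (by omega))]
      ring
    have hcne : (slCharPoly (n + 2) f q w A B).coeff (n + 2) ≠ 0 := by
      rw [hctop]
      exact mul_ne_zero (mul_ne_zero hune hfN) (hPne (n + 2) le_rfl)
    have hdegle : (slCharPoly (n + 2) f q w A B).natDegree ≤ n + 2 := by
      rw [hΓ]
      refine natDegree_add_le_of_degree_le (natDegree_add_le_of_degree_le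
        (natDegree_add_le_of_degree_le (natDegree_add_le_of_degree_le (nd_C _ _)
          (nd_Cmul _ _ _ (dφ2.trans (by omega)))) (nd_Cmul _ _ _ (dδ2.trans (by omega))))
        (nd_Cmul_sub _ _ _ _ dφ3 (dφ2.trans (by omega))))
        (nd_Cmul_sub _ _ _ _ (dδ3.trans (by omega)) (dδ2.trans (by omega)))
    have hne0 : slCharPoly (n + 2) f q w A B ≠ 0 := fun h => hcne (by rw [h, coeff_zero])
    have hrkM : (!![m1, B 0 1; m2, B 1 1] : Matrix (Fin 2) (Fin 2) ℂ).rank = 2 := by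
      refine rank_two_of_det ?_
      rw [Matrix.det_fin_two_of]
      exact hdet
    refine ⟨hne0, ?_⟩
    rw [hcard _, le_antisymm hdegle (le_natDegree_of_ne_zero hcne), hrkM]
    omega
end

section
/- Let p(λ,t) be a family of real polynomials of degree ≤ k whose coefficients depend continuously on a parameter t∈[t_0-ε,t_0+ε], such that for t≠t_0 the polynomial p(·,t) has exactly k real roots λ_0(t)≤...≤λ_{k-1}(t), and p(·,t_0) has exactly m<k real roots μ_0≤...≤μ_{m-1}. If for each n, λ_n(t) → -∞ as t→t_0^- for 0≤n≤k-m-1, then λ_n(t) → μ_{n-k+m} as t→t_0^- for k-m≤n≤k-1. -/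
open Polynomial Filter

lemma ratio_tendsto_one {r : ℕ → ℝ} (x y : ℝ)
    (h : Tendsto r atTop atBot ∨ Tendsto r atTop atTop) :
    Tendsto (fun j => (y - r j)/(x - r j)) atTop (nhds 1) := by
  have hxr : Tendsto (fun j => x - r j) atTop atTop ∨
      Tendsto (fun j => x - r j) atTop atBot := by
    rcases h with h | h
    · left
      have h1 : Tendsto (fun j => -(r j)) atTop atTop :=
        tendsto_neg_atTop_iff (f := r) (l := atTop).mpr h
      have := tendsto_atTop_add_const_right atTop x h1
      simpa [sub_eq_neg_add, add_comm] using this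
    · right
      have h1 : Tendsto (fun j => -(r j)) atTop atBot :=
        tendsto_neg_atBot_iff (f := r) (l := atTop).mpr h
      have := tendsto_atBot_add_const_right atTop x h1
      simpa [sub_eq_neg_add, add_comm] using this
  have hne : ∀ᶠ j in atTop, x - r j ≠ 0 := by
    rcases hxr with h1 | h1
    · filter_upwards [h1.eventually_ge_atTop 1] with j hj; intro hc; rw [hc] at hj; linarith
    · filter_upwards [h1.eventually_le_atBot (-1)] with j hj; intro hc; rw [hc] at hj; linarith
  have h0 : Tendsto (fun j => (y - x)/(x - r j)) atTop (nhds 0) := by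
    rcases hxr with h1 | h1
    · exact h1.const_div_atTop (y - x)
    · have h2 : Tendsto (fun j => -(x - r j)) atTop atTop :=
        tendsto_neg_atTop_iff (f := fun j => x - r j) (l := atTop).mpr h1
      have h3 := h2.const_div_atTop (-(y - x))
      have he : (fun j => -(y-x) / -(x - r j)) = fun j => (y - x)/(x - r j) := by
        funext j; rw [neg_div_neg_eq]
      rwa [he] at h3
  have hadd := (tendsto_const_nhds (x := (1:ℝ)) (f := atTop)).add h0
  rw [add_zero] at hadd
  apply hadd.congr'
  filter_upwards [hne] with j hj
  field_simp
  ring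


lemma sorted_map_range_eq {m : ℕ} {f g : ℕ → ℝ}
    (hf : ∀ i j, i ≤ j → j < m → f i ≤ f j) (hg : ∀ i j, i ≤ j → j < m → g i ≤ g j)
    (h : Multiset.map f (Multiset.range m) = Multiset.map g (Multiset.range m)) :
    ∀ j < m, f j = g j := by
  have hperm : List.Perm ((List.range m).map f) ((List.range m).map g) := by
    rw [← Multiset.coe_eq_coe]
    simpa [Multiset.range] using h
  have hsf : List.Pairwise (· ≤ ·) ((List.range m).map f) := by
    rw [List.pairwise_map]
    refine List.Pairwise.imp_of_mem ?_ List.pairwise_lt_range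
    intro a b ha hb hab
    exact hf a b hab.le (List.mem_range.mp hb)
  have hsg : List.Pairwise (· ≤ ·) ((List.range m).map g) := by
    rw [List.pairwise_map]
    refine List.Pairwise.imp_of_mem ?_ List.pairwise_lt_range
    intro a b ha hb hab
    exact hg a b hab.le (List.mem_range.mp hb)
  have heq := List.Perm.eq_of_pairwise' hsf hsg hperm
  intro j hj
  have hlen : j < ((List.range m).map f).length := by simpa using hj
  have := congrArg (fun l => l[j]?) heq
  simpa [hj] using this


-- eval of p t as product over roots
lemma eval_eq_prod {k : ℕ} (q : Polynomial ℝ) (lam : ℕ → ℝ)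
    (hk : 1 ≤ k) (hdeg : q.natDegree ≤ k)
    (hroots : q.roots = Multiset.map lam (Multiset.range k)) :
    ∀ y : ℝ, q.eval y = q.leadingCoeff * ∏ i ∈ Finset.range k, (y - lam i) := by
  have hcard : Multiset.card q.roots = k := by rw [hroots]; simp
  have hq0 : q ≠ 0 := by
    intro h; rw [h, roots_zero] at hcard; simp at hcard; omega
  have hnat : q.natDegree = k := le_antisymm hdeg (hcard ▸ q.card_roots')
  have hfact := C_leadingCoeff_mul_prod_multiset_X_sub_C (p := q) (hcard.trans hnat.symm)
  intro y
  conv_lhs => rw [← hfact]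
  rw [eval_mul, eval_C, eval_multiset_prod, hroots, Multiset.map_map, Multiset.map_map]
  congr 1
  rw [Finset.prod_eq_multiset_prod]
  rw [Finset.range_val]
  congr 1
  apply Multiset.map_congr rfl
  intro i _
  simp


/-- Polynomial-root formulation of Theorem 2.2(i): let `p(·,t)` be a family of real
polynomials of degree `≤ k` with coefficients continuous in `t ∈ [t₀-ε, t₀+ε]`, having
exactly `k` real roots (with multiplicity) `λ₀(t) ≤ … ≤ λ_{k-1}(t)` for `t ≠ t₀`, and
exactly `m < k` real roots `μ₀ ≤ … ≤ μ_{m-1}` at `t = t₀`.  If `λₙ(t) → -∞` as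
`t → t₀⁻` for `0 ≤ n ≤ k-m-1`, then `λₙ(t) → μ_{n-(k-m)}` as `t → t₀⁻` for
`k-m ≤ n ≤ k-1`. -/
theorem escaping_roots_limit (k m : ℕ) (hm : m < k) (t0 ε : ℝ) (hε : 0 < ε)
    (p : ℝ → Polynomial ℝ)
    (hdeg : ∀ t ∈ Set.Icc (t0 - ε) (t0 + ε), (p t).natDegree ≤ k)
    (hcont : ∀ i : ℕ, ContinuousOn (fun t => (p t).coeff i) (Set.Icc (t0 - ε) (t0 + ε)))
    (lam : ℕ → ℝ → ℝ) (μ : ℕ → ℝ)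
    (hroots : ∀ t ∈ Set.Icc (t0 - ε) (t0 + ε), t ≠ t0 →
      (p t).roots = Multiset.map (fun n => lam n t) (Multiset.range k))
    (hsorted : ∀ t ∈ Set.Icc (t0 - ε) (t0 + ε), t ≠ t0 →
      ∀ i j : ℕ, i ≤ j → j < k → lam i t ≤ lam j t)
    (hroots0 : (p t0).roots = Multiset.map μ (Multiset.range m))
    (hsorted0 : ∀ i j : ℕ, i ≤ j → j < m → μ i ≤ μ j)
    (hbot : ∀ n < k - m,
      Tendsto (lam n) (nhdsWithin t0 (Set.Iio t0)) atBot) :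
    ∀ n, k - m ≤ n → n < k →
      Tendsto (lam n) (nhdsWithin t0 (Set.Iio t0)) (nhds (μ (n - (k - m)))) := by
  classical
  intro n hn1 hn2
  rcases Nat.eq_zero_or_pos m with hm0 | hm0
  · omega
  have ht0Icc : t0 ∈ Set.Icc (t0 - ε) (t0 + ε) := by constructor <;> linarith
  have hp0 : p t0 ≠ 0 := by
    intro h
    rw [h, roots_zero] at hroots0
    have := congrArg Multiset.card hroots0
    simp at this; omega
  apply tendsto_of_subseq_tendsto
  intro ns hns
  -- tail of ns lies in Icc ∩ Iio
  have h1 : ∀ᶠ j in atTop, ns j ∈ Set.Iio t0 := hns self_mem_nhdsWithin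
  have h2 : ∀ᶠ j in atTop, ns j ∈ Set.Icc (t0 - ε) (t0 + ε) :=
    hns (nhdsWithin_le_nhds (Icc_mem_nhds (by linarith) (by linarith)))
  obtain ⟨N, hN⟩ := eventually_atTop.mp (h1.and h2)
  set w : ℕ → ℝ := fun j => ns (j + N) with hw
  have hwlt : ∀ j, w j < t0 := fun j => (hN (j + N) (Nat.le_add_left N j)).1
  have hwmem : ∀ j, w j ∈ Set.Icc (t0 - ε) (t0 + ε) := fun j => (hN (j + N) (Nat.le_add_left N j)).2
  have hwne : ∀ j, w j ≠ t0 := fun j => ne_of_lt (hwlt j)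
  have hwt : Tendsto w atTop (nhdsWithin t0 (Set.Iio t0)) :=
    hns.comp (tendsto_add_atTop_nat N)
  -- extract subsequence with EReal limits
  obtain ⟨L, φ, hφ, hLconv⟩ := CompactSpace.tendsto_subseq
    (fun j (i : ℕ) => ((lam i (w j) : ℝ) : EReal))
  have hφtop : Tendsto φ atTop atTop := hφ.tendsto_atTop
  set u : ℕ → ℝ := fun j => w (φ j) with hu
  have hult : ∀ j, u j < t0 := fun j => hwlt (φ j)
  have humem : ∀ j, u j ∈ Set.Icc (t0 - ε) (t0 + ε) := fun j => hwmem (φ j)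
  have hune : ∀ j, u j ≠ t0 := fun j => hwne (φ j)
  have hut : Tendsto u atTop (nhdsWithin t0 (Set.Iio t0)) := hwt.comp hφtop
  have huIcc : Tendsto u atTop (nhdsWithin t0 (Set.Icc (t0 - ε) (t0 + ε))) := by
    rw [tendsto_nhdsWithin_iff]
    exact ⟨hut.mono_right nhdsWithin_le_nhds, Eventually.of_forall humem⟩
  have hL : ∀ i, Tendsto (fun j => ((lam i (u j) : ℝ) : EReal)) atTop (nhds (L i)) :=
    fun i => tendsto_pi_nhds.mp hLconv i
  -- monotonicity of L
  have hLmono : ∀ i i', i ≤ i' → i' < k → L i ≤ L i' := by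
    intro i i' hii hik
    refine le_of_tendsto_of_tendsto' (hL i) (hL i') (fun j => ?_)
    exact_mod_cast hsorted (u j) (humem j) (hune j) i i' hii hik
  -- bottom escape
  have hLbot : ∀ i, i < k - m → L i = ⊥ := by
    intro i hi
    have hb : Tendsto (fun j => lam i (u j)) atTop atBot := (hbot i hi).comp hut
    have hb' : Tendsto (fun j => ((lam i (u j) : ℝ) : EReal)) atTop (nhds ⊥) := by
      rw [EReal.tendsto_nhds_bot_iff_real]
      intro x
      filter_upwards [hb.eventually_le_atBot (x - 1)] with j hj
      exact_mod_cast lt_of_le_of_lt hj (by linarith)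
    exact tendsto_nhds_unique (hL i) hb'
  -- finite-limit index set
  set S : Finset ℕ := (Finset.range k).filter (fun i => L i ≠ ⊥ ∧ L i ≠ ⊤) with hS
  set v : ℕ → ℝ := fun i => (L i).toReal with hv
  have hSv : ∀ i ∈ S, L i = ((v i : ℝ) : EReal) := by
    intro i hi
    rw [hS, Finset.mem_filter] at hi
    exact (EReal.coe_toReal hi.2.2 hi.2.1).symm
  have hvconv : ∀ i ∈ S, Tendsto (fun j => lam i (u j)) atTop (nhds (v i)) := by
    intro i hi
    have := hL i
    rw [hSv i hi] at this
    exact EReal.tendsto_coe.mp this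
  -- choose test point x0
  obtain ⟨x0, hx0⟩ := Infinite.exists_notMem_finset ((p t0).roots.toFinset ∪ S.image v)
  have hx0root : (p t0).eval x0 ≠ 0 := by
    intro h
    exact hx0 (Finset.mem_union_left _ (Multiset.mem_toFinset.mpr (mem_roots'.mpr ⟨hp0, h⟩)))
  have hx0v : ∀ i ∈ S, x0 ≠ v i := by
    intro i hi h
    exact hx0 (Finset.mem_union_right _ (Finset.mem_image.mpr ⟨i, hi, h.symm⟩))
  have hPx : ∏ i ∈ S, (x0 - v i) ≠ 0 :=
    Finset.prod_ne_zero_iff.mpr (fun i hi => sub_ne_zero_of_ne (hx0v i hi))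
  -- coefficientwise convergence and eval convergence
  have hcoef : ∀ i : ℕ, Tendsto (fun j => (p (u j)).coeff i) atTop (nhds ((p t0).coeff i)) :=
    fun i => ((hcont i t0 ht0Icc).tendsto).comp huIcc
  have hEval : ∀ y : ℝ, Tendsto (fun j => (p (u j)).eval y) atTop (nhds ((p t0).eval y)) := by
    intro y
    have hrw : ∀ t ∈ Set.Icc (t0 - ε) (t0 + ε),
        (p t).eval y = ∑ i ∈ Finset.range (k + 1), (p t).coeff i * y ^ i := by
      intro t ht
      exact eval_eq_sum_range' (lt_of_le_of_lt (hdeg t ht) (Nat.lt_succ_self k)) y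
    have : Tendsto (fun j => ∑ i ∈ Finset.range (k + 1), (p (u j)).coeff i * y ^ i) atTop
        (nhds (∑ i ∈ Finset.range (k + 1), (p t0).coeff i * y ^ i)) :=
      tendsto_finset_sum _ (fun i _ => (hcoef i).mul_const _)
    rw [hrw t0 ht0Icc]
    exact this.congr (fun j => (hrw (u j) (humem j)).symm)
  -- eval as products
  have hk1 : 1 ≤ k := by omega
  have hevalprod : ∀ j, ∀ y : ℝ,
      (p (u j)).eval y = (p (u j)).leadingCoeff * ∏ i ∈ Finset.range k, (y - lam i (u j)) :=
    fun j => eval_eq_prod (p (u j)) (fun i => lam i (u j)) hk1 (hdeg _ (humem j))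
      (hroots _ (humem j) (hune j))
  have hpune : ∀ j, p (u j) ≠ 0 := by
    intro j h
    have := hroots _ (humem j) (hune j)
    rw [h, roots_zero] at this
    have := congrArg Multiset.card this
    simp at this; omega
  -- key identity for every y
  have hkey : ∀ y : ℝ, (p t0).eval y / (p t0).eval x0 = ∏ i ∈ S, (y - v i) / (x0 - v i) := by
    intro y
    have hDne : ∀ᶠ j in atTop, (p (u j)).eval x0 ≠ 0 :=
      (hEval x0).eventually_ne hx0root
    -- LHS limit
    have hlhs : Tendsto (fun j => (p (u j)).eval y / (p (u j)).eval x0) atTop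
        (nhds ((p t0).eval y / (p t0).eval x0)) := (hEval y).div (hEval x0) hx0root
    -- RHS limit
    have hfac : ∀ i ∈ Finset.range k, Tendsto
        (fun j => (y - lam i (u j)) / (x0 - lam i (u j))) atTop
        (nhds (if i ∈ S then (y - v i) / (x0 - v i) else 1)) := by
      intro i hik
      by_cases hiS : i ∈ S
      · rw [if_pos hiS]
        exact ((tendsto_const_nhds.sub (hvconv i hiS)).div
          (tendsto_const_nhds.sub (hvconv i hiS)) (sub_ne_zero_of_ne (hx0v i hiS)))
      · rw [if_neg hiS]
        have hbt : L i = ⊥ ∨ L i = ⊤ := by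
          rw [hS, Finset.mem_filter] at hiS
          push_neg at hiS
          by_cases hb : L i = ⊥
          · exact Or.inl hb
          · exact Or.inr (hiS hik hb)
        apply ratio_tendsto_one
        rcases hbt with hb | hb
        · left
          have := hL i; rw [hb] at this
          rw [tendsto_atBot]
          intro b
          have := (EReal.tendsto_nhds_bot_iff_real.mp this) b
          filter_upwards [this] with j hj
          exact le_of_lt (by exact_mod_cast hj)
        · right
          have := hL i; rw [hb] at this
          rw [tendsto_atTop]
          intro b
          have := (EReal.tendsto_nhds_top_iff_real.mp this) b
          filter_upwards [this] with j hj
          exact le_of_lt (by exact_mod_cast hj)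
    have hrhs : Tendsto (fun j => ∏ i ∈ Finset.range k,
        (y - lam i (u j)) / (x0 - lam i (u j))) atTop
        (nhds (∏ i ∈ Finset.range k, if i ∈ S then (y - v i) / (x0 - v i) else 1)) :=
      tendsto_finset_prod _ hfac
    have hprodeq : (∏ i ∈ Finset.range k, if i ∈ S then (y - v i) / (x0 - v i) else 1)
        = ∏ i ∈ S, (y - v i) / (x0 - v i) := by
      rw [hS, Finset.prod_filter]
      apply Finset.prod_congr rfl
      intro i hi
      simp only [Finset.mem_filter, hi, true_and]
    have hlhs' : Tendsto (fun j => (p (u j)).eval y / (p (u j)).eval x0) atTop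
        (nhds (∏ i ∈ S, (y - v i) / (x0 - v i))) := by
      rw [← hprodeq]
      apply hrhs.congr'
      filter_upwards [hDne] with j hD
      have hc : (p (u j)).leadingCoeff ≠ 0 := leadingCoeff_ne_zero.mpr (hpune j)
      rw [hevalprod j y, hevalprod j x0, mul_div_mul_left _ _ hc, Finset.prod_div_distrib]
    exact tendsto_nhds_unique hlhs hlhs'
  -- polynomial identity
  set A : ℝ := (p t0).eval x0 / ∏ i ∈ S, (x0 - v i) with hA
  have hAne : A ≠ 0 := div_ne_zero hx0root hPx
  have hpoly : p t0 = C A * ∏ i ∈ S, (X - C (v i)) := by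
    apply Polynomial.funext
    intro y
    rw [eval_mul, eval_C, eval_prod]
    simp only [eval_sub, eval_X, eval_C]
    have hkey2 : (p t0).eval y / (p t0).eval x0
        = (∏ i ∈ S, (y - v i)) / (∏ i ∈ S, (x0 - v i)) := by
      rw [hkey y, Finset.prod_div_distrib]
    have hcross := (div_eq_div_iff hx0root hPx).mp hkey2
    calc (p t0).eval y = ((p t0).eval y * ∏ i ∈ S, (x0 - v i)) / ∏ i ∈ S, (x0 - v i) :=
          (mul_div_cancel_right₀ _ hPx).symm
      _ = ((∏ i ∈ S, (y - v i)) * (p t0).eval x0) / ∏ i ∈ S, (x0 - v i) := by rw [hcross]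
      _ = A * ∏ i ∈ S, (y - v i) := by rw [hA]; ring
  -- root multiset identification
  have hrootsS : Multiset.map v S.val = Multiset.map μ (Multiset.range m) := by
    have hprodm : ∏ i ∈ S, (X - C (v i))
        = ((S.val.map v).map (fun a => X - C a)).prod := by
      rw [Finset.prod_eq_multiset_prod, Multiset.map_map]
      rfl
    have := hroots0
    rw [hpoly, roots_C_mul _ hAne, hprodm, roots_multiset_prod_X_sub_C] at this
    exact this
  have hScard : S.card = m := by
    have := congrArg Multiset.card hrootsS
    simpa using this
  -- counting: no tops, exactly k-m bottoms
  set B : Finset ℕ := (Finset.range k).filter (fun i => L i = ⊥) with hB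
  set T : Finset ℕ := (Finset.range k).filter (fun i => L i = ⊤) with hT
  have hBT : (Finset.range k).filter (fun i => ¬(L i ≠ ⊥ ∧ L i ≠ ⊤)) = B ∪ T := by
    ext i
    simp only [hB, hT, Finset.mem_filter, Finset.mem_union]
    tauto
  have hdisj : Disjoint B T := by
    rw [Finset.disjoint_left]
    intro i hiB hiT
    rw [hB, Finset.mem_filter] at hiB
    rw [hT, Finset.mem_filter] at hiT
    rw [hiB.2] at hiT
    exact absurd hiT.2 (by simp)
  have hsplit := Finset.card_filter_add_card_filter_not
    (s := Finset.range k) (p := fun i => L i ≠ ⊥ ∧ L i ≠ ⊤)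
  rw [hBT, Finset.card_union_of_disjoint hdisj, Finset.card_range] at hsplit
  have hBsub : Finset.range (k - m) ⊆ B := by
    intro i hi
    rw [Finset.mem_range] at hi
    rw [hB, Finset.mem_filter, Finset.mem_range]
    exact ⟨by omega, hLbot i hi⟩
  have hBcard : k - m ≤ B.card := by
    have := Finset.card_le_card hBsub
    simpa using this
  rw [← hS] at hsplit
  have hTzero : T.card = 0 ∧ B.card = k - m := by
    constructor <;> omega
  -- S = Ico (k-m) k
  have hnS : ∀ i, k - m ≤ i → i < k → i ∈ S := by
    intro i hi1 hi2
    rw [hS, Finset.mem_filter, Finset.mem_range]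
    refine ⟨hi2, ?_, ?_⟩
    · intro hbot'
      have hsubB : Finset.range (i + 1) ⊆ B := by
        intro i' hi'
        rw [Finset.mem_range] at hi'
        rw [hB, Finset.mem_filter, Finset.mem_range]
        refine ⟨by omega, ?_⟩
        have := hLmono i' i (by omega) hi2
        rw [hbot'] at this
        exact le_bot_iff.mp this
      have := Finset.card_le_card hsubB
      rw [Finset.card_range] at this
      omega
    · intro htop'
      have : i ∈ T := by
        rw [hT, Finset.mem_filter, Finset.mem_range]
        exact ⟨hi2, htop'⟩
      have := Finset.card_pos.mpr ⟨i, this⟩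
      omega
  have hSIco : S = Finset.Ico (k - m) k := by
    have hsub : Finset.Ico (k - m) k ⊆ S := by
      intro i hi
      rw [Finset.mem_Ico] at hi
      exact hnS i hi.1 hi.2
    have hcard : S.card ≤ (Finset.Ico (k - m) k).card := by
      rw [Nat.card_Ico, hScard]; omega
    exact (Finset.eq_of_subset_of_card_le hsub hcard).symm
  -- rewrite multiset via reindexing
  have hIcoval : (Finset.Ico (k - m) k).val = Multiset.map (fun j => k - m + j) (Multiset.range m) := by
    have himg : Finset.image (fun j => k - m + j) (Finset.range m) = Finset.Ico (k - m) k := by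
      ext x
      simp only [Finset.mem_image, Finset.mem_range, Finset.mem_Ico]
      constructor
      · rintro ⟨j, hj, rfl⟩; omega
      · intro hx; exact ⟨x - (k - m), by omega, by omega⟩
    have hinj : Set.InjOn (fun j => k - m + j) (Finset.range m) := by
      intro a _ b _ h
      simpa using h
    rw [← himg, Finset.image_val_of_injOn hinj, Finset.range_val]
  have hmap : Multiset.map (fun j => v (k - m + j)) (Multiset.range m)
      = Multiset.map μ (Multiset.range m) := by
    have := hrootsS
    rw [hSIco, hIcoval, Multiset.map_map] at this
    exact this
  -- sorted comparison
  have hvmono : ∀ i j, i ≤ j → j < m → v (k - m + i) ≤ v (k - m + j) := by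
    intro i j hij hjm
    have hiS : (k - m + i) ∈ S := hnS _ (by omega) (by omega)
    have hjS : (k - m + j) ∈ S := hnS _ (by omega) (by omega)
    have := hLmono (k - m + i) (k - m + j) (by omega) (by omega)
    rw [hSv _ hiS, hSv _ hjS] at this
    exact_mod_cast this
  have hfinal := sorted_map_range_eq hvmono hsorted0 hmap (n - (k - m)) (by omega)
  -- conclude
  refine ⟨fun j => φ j + N, ?_⟩
  have hnmem : n ∈ S := hnS n hn1 hn2
  have : Tendsto (fun j => lam n (u j)) atTop (nhds (v n)) := hvconv n hnmem
  have hveq : v n = μ (n - (k - m)) := by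
    have hn' : k - m + (n - (k - m)) = n := by omega
    calc v n = v (k - m + (n - (k - m))) := by rw [hn']
      _ = μ (n - (k - m)) := hfinal
  rw [hveq] at this
  exact this
end

section
/- Fix a self-adjoint boundary condition with coefficient matrices A, B and set μ_1 = a_{11}b_{22} - a_{21}b_{12}, μ_2 = a_{22}b_{12} - a_{12}b_{22}. If μ_1≠0 and μ_2≠0, then for every discrete Sturm-Liouville equation ω=(1/f,q,w), the problem (ω,A|B) has exactly N-1 eigenvalues when 1/f_0 = -μ_2/μ_1 and exactly N eigenvalues when 1/f_0 ≠ -μ_2/μ_1. -/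
open Polynomial Matrix

noncomputable def slPr (f w : ℕ → ℝ) (n : ℕ) : ℂ :=
  ∏ k ∈ Finset.range n, (-(w (k+1) : ℂ) / (f (k+1) : ℂ))

lemma slSol_coeff (f q w : ℕ → ℝ) (y0 d0 : ℂ) :
    ∀ m : ℕ, (∀ k, m < k → (slSol f q w y0 d0 (m+1)).coeff k = 0) ∧
      (slSol f q w y0 d0 (m+1)).coeff m = (y0 + d0 / (f 0 : ℂ)) * slPr f w m := by
  intro m
  induction m using Nat.twoStepInduction with
  | zero =>
    constructor
    · intro k hk
      show (C (y0 + d0 / (f 0:ℂ))).coeff k = 0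
      rw [coeff_C, if_neg (by omega)]
    · show (C (y0 + d0 / (f 0:ℂ))).coeff 0 = _
      rw [coeff_C, if_pos rfl]
      simp [slPr]
  | one =>
    have e0 : slSol f q w y0 d0 0 = C y0 := rfl
    have e1 : slSol f q w y0 d0 1 = C (y0 + d0 / (f 0:ℂ)) := rfl
    have e2 : slSol f q w y0 d0 2 = slSol f q w y0 d0 1 + C ((f 1 : ℂ))⁻¹ *
        (C ((f 0 : ℂ)) * (slSol f q w y0 d0 1 - slSol f q w y0 d0 0)
          + C ((q 1 : ℂ)) * slSol f q w y0 d0 1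
          - X * C ((w 1 : ℂ)) * slSol f q w y0 d0 1) := rfl
    rw [e2, e1, e0]
    constructor
    · intro k hk
      obtain ⟨j, rfl⟩ : ∃ j, k = j + 1 := ⟨k - 1, by omega⟩
      have hc : ∀ z : ℂ, (C z).coeff (j+1) = 0 := fun z => coeff_C_ne_zero (by omega)
      have hc' : ∀ z : ℂ, (C z).coeff j = 0 := fun z => coeff_C_ne_zero (by omega)
      have hx : ∀ δ : ℂ, (X * C δ * C (y0 + d0 / (f 0:ℂ))).coeff (j+1)
          = δ * (C (y0 + d0 / (f 0:ℂ))).coeff j := by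
        intro δ
        rw [show X * C δ * C (y0 + d0 / (f 0:ℂ)) = X * (C δ * C (y0 + d0 / (f 0:ℂ))) by ring,
          coeff_X_mul, coeff_C_mul]
      simp only [coeff_add, coeff_sub, coeff_C_mul, hx, hc, hc']
      ring
    · rw [show X * C ((w 1:ℂ)) * C (y0 + d0 / (f 0:ℂ))
          = C ((w 1:ℂ) * (y0 + d0 / (f 0:ℂ))) * X by rw [C_mul]; ring]
      simp only [coeff_add, coeff_sub, coeff_C_mul, coeff_C, coeff_X]
      norm_num
      simp [slPr]
      ring
  | more m ih1 ih2 =>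
    simp only [show m+1+1 = m+2 from rfl] at ih1 ih2
    have e3 : slSol f q w y0 d0 (m+3) = slSol f q w y0 d0 (m + 2) + C ((f (m + 2) : ℂ))⁻¹ *
        (C ((f (m+1) : ℂ)) * (slSol f q w y0 d0 (m + 2) - slSol f q w y0 d0 (m+1))
          + C ((q (m + 2) : ℂ)) * slSol f q w y0 d0 (m + 2)
          - X * C ((w (m + 2) : ℂ)) * slSol f q w y0 d0 (m + 2)) := rfl
    obtain ⟨z1, c1⟩ := ih1
    obtain ⟨z2, c2⟩ := ih2
    have hXmul : ∀ (δ : ℂ) (p : Polynomial ℂ) (j : ℕ),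
        (X * C δ * p).coeff (j+1) = δ * p.coeff j := by
      intro δ p j
      rw [show X * C δ * p = X * (C δ * p) by ring, coeff_X_mul, coeff_C_mul]
    constructor
    · intro k hk
      obtain ⟨j, rfl⟩ : ∃ j, k = j + 1 := ⟨k - 1, by omega⟩
      rw [e3]
      have u1 : (slSol f q w y0 d0 (m+2)).coeff (j+1) = 0 := z2 _ (by omega)
      have u2 : (slSol f q w y0 d0 (m+1)).coeff (j+1) = 0 := z1 _ (by omega)
      have u3 : (slSol f q w y0 d0 (m+2)).coeff j = 0 := z2 _ (by omega)
      simp only [coeff_add, coeff_sub, coeff_C_mul, hXmul, u1, u2, u3]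
      ring
    · rw [e3]
      have hx : (X * C ((w (m+2):ℂ)) * slSol f q w y0 d0 (m+2)).coeff (m+2)
          = (w (m+2):ℂ) * (slSol f q w y0 d0 (m+2)).coeff (m+1) := hXmul _ _ (m+1)
      have t1 : (slSol f q w y0 d0 (m+2)).coeff (m+2) = 0 := z2 (m+2) (by omega)
      have t2 : (slSol f q w y0 d0 (m+1)).coeff (m+2) = 0 := z1 (m+2) (by omega)
      have pr : slPr f w (m+2) = slPr f w (m+1) * (-(w (m+2):ℂ)/((f (m+2)):ℂ)) :=
        Finset.prod_range_succ _ (m+1)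
      simp only [coeff_add, coeff_sub, coeff_C_mul, hx, t1, t2, c2, pr]
      ring

noncomputable def slPr2 (f w : ℕ → ℝ) (n : ℕ) : ℂ :=
  ∏ k ∈ Finset.range n, (-(w (k+2) : ℂ) / (f (k+2) : ℂ))

lemma slSol_succ (f q w : ℕ → ℝ) (y0 d0 : ℂ) (n : ℕ) :
    slSol f q w y0 d0 (n+2) = slSol f q w y0 d0 (n + 1) + C ((f (n + 1) : ℂ))⁻¹ *
        (C ((f n : ℂ)) * (slSol f q w y0 d0 (n + 1) - slSol f q w y0 d0 n)
          + C ((q (n + 1) : ℂ)) * slSol f q w y0 d0 (n + 1)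
          - X * C ((w (n + 1) : ℂ)) * slSol f q w y0 d0 (n + 1)) := rfl

lemma slSol_lin (f q w : ℕ → ℝ) :
    ∀ n, slSol f q w 1 (-(f 0 : ℂ)) n
      = slSol f q w 1 0 n - C ((f 0 : ℂ)) * slSol f q w 0 1 n := by
  have key : ∀ n, (slSol f q w 1 (-(f 0 : ℂ)) n
      = slSol f q w 1 0 n - C ((f 0 : ℂ)) * slSol f q w 0 1 n) ∧
      (slSol f q w 1 (-(f 0 : ℂ)) (n+1)
      = slSol f q w 1 0 (n+1) - C ((f 0 : ℂ)) * slSol f q w 0 1 (n+1)) := by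
    intro n
    induction n with
    | zero =>
      constructor
      · show C (1:ℂ) = C 1 - C ((f 0:ℂ)) * C 0
        simp
      · show C (1 + -(f 0:ℂ) / (f 0:ℂ)) = C (1 + 0/(f 0:ℂ)) - C ((f 0:ℂ)) * C (0 + 1/(f 0:ℂ))
        rw [← C_mul, ← C_sub]
        congr 1
        field_simp
        ring
    | succ n ih =>
      obtain ⟨ih1, ih2⟩ := ih
      refine ⟨ih2, ?_⟩
      rw [slSol_succ, slSol_succ, slSol_succ, ih1, ih2]
      ring
  exact fun n => (key n).1

lemma slChi_coeff (f q w : ℕ → ℝ) (hf0 : (f 0:ℂ) ≠ 0) :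
    ∀ m : ℕ, (∀ k, m < k → (slSol f q w 1 (-(f 0:ℂ)) (m+2)).coeff k = 0) ∧
      (slSol f q w 1 (-(f 0:ℂ)) (m+2)).coeff m = (-(f 0:ℂ) / (f 1:ℂ)) * slPr2 f w m := by
  have hχ1 : slSol f q w 1 (-(f 0:ℂ)) 1 = 0 := by
    show C (1 + -(f 0:ℂ) / (f 0:ℂ)) = 0
    rw [neg_div, div_self hf0]
    simp
  have hχ0 : slSol f q w 1 (-(f 0:ℂ)) 0 = C 1 := rfl
  have e2 : slSol f q w 1 (-(f 0:ℂ)) 2 = C (-(f 0:ℂ)/(f 1:ℂ)) := by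
    rw [slSol_succ f q w 1 (-(f 0:ℂ)) 0, hχ1, hχ0]
    rw [show (-(f 0:ℂ)/(f 1:ℂ)) = ((f 1:ℂ))⁻¹ * ((f 0:ℂ) * ((0:ℂ) - 1)) by ring,
      C_mul, C_mul, C_sub, C_0, C_1]
    ring
  have hXmul : ∀ (δ : ℂ) (p : Polynomial ℂ) (j : ℕ),
      (X * C δ * p).coeff (j+1) = δ * p.coeff j := by
    intro δ p j
    rw [show X * C δ * p = X * (C δ * p) by ring, coeff_X_mul, coeff_C_mul]
  intro m
  induction m using Nat.twoStepInduction with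
  | zero =>
    rw [e2]
    constructor
    · intro k hk
      exact coeff_C_ne_zero (by omega)
    · rw [coeff_C, if_pos rfl]
      simp [slPr2]
  | one =>
    have e3 : slSol f q w 1 (-(f 0:ℂ)) 3 = slSol f q w 1 (-(f 0:ℂ)) 2 + C ((f 2 : ℂ))⁻¹ *
        (C ((f 1 : ℂ)) * (slSol f q w 1 (-(f 0:ℂ)) 2 - slSol f q w 1 (-(f 0:ℂ)) 1)
          + C ((q 2 : ℂ)) * slSol f q w 1 (-(f 0:ℂ)) 2
          - X * C ((w 2 : ℂ)) * slSol f q w 1 (-(f 0:ℂ)) 2) := rfl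
    rw [e3, e2, hχ1]
    constructor
    · intro k hk
      obtain ⟨j, rfl⟩ : ∃ j, k = j + 1 := ⟨k - 1, by omega⟩
      have hc : ∀ z : ℂ, (C z).coeff (j+1) = 0 := fun z => coeff_C_ne_zero (by omega)
      have hc' : ∀ z : ℂ, (C z).coeff j = 0 := fun z => coeff_C_ne_zero (by omega)
      simp only [coeff_add, coeff_sub, coeff_C_mul, hXmul, hc, hc', coeff_zero]
      ring
    · have hc : ∀ z : ℂ, (C z).coeff 1 = 0 := fun z => coeff_C_ne_zero (by omega)
      simp only [coeff_add, coeff_sub, coeff_C_mul, hXmul, hc, coeff_zero]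
      rw [coeff_C, if_pos rfl]
      have pr1 : slPr2 f w 1 = -(w 2:ℂ)/(f 2:ℂ) := by simp [slPr2]
      rw [pr1]
      ring
  | more m ih1 ih2 =>
    simp only [show m+1+1 = m+2 from rfl, show m+1+2 = m+3 from rfl,
      show m+2+2 = m+4 from rfl] at ih1 ih2 ⊢
    obtain ⟨z1, c1⟩ := ih1
    obtain ⟨z2, c2⟩ := ih2
    have e4 : slSol f q w 1 (-(f 0:ℂ)) (m+4) = slSol f q w 1 (-(f 0:ℂ)) (m + 3) + C ((f (m + 3) : ℂ))⁻¹ *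
        (C ((f (m+2) : ℂ)) * (slSol f q w 1 (-(f 0:ℂ)) (m + 3) - slSol f q w 1 (-(f 0:ℂ)) (m+2))
          + C ((q (m + 3) : ℂ)) * slSol f q w 1 (-(f 0:ℂ)) (m + 3)
          - X * C ((w (m + 3) : ℂ)) * slSol f q w 1 (-(f 0:ℂ)) (m + 3)) := rfl
    constructor
    · intro k hk
      obtain ⟨j, rfl⟩ : ∃ j, k = j + 1 := ⟨k - 1, by omega⟩
      rw [e4]
      have u1 : (slSol f q w 1 (-(f 0:ℂ)) (m+3)).coeff (j+1) = 0 := z2 _ (by omega)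
      have u2 : (slSol f q w 1 (-(f 0:ℂ)) (m+2)).coeff (j+1) = 0 := z1 _ (by omega)
      have u3 : (slSol f q w 1 (-(f 0:ℂ)) (m+3)).coeff j = 0 := z2 _ (by omega)
      simp only [coeff_add, coeff_sub, coeff_C_mul, hXmul, u1, u2, u3]
      ring
    · rw [e4]
      have hx : (X * C ((w (m+3):ℂ)) * slSol f q w 1 (-(f 0:ℂ)) (m+3)).coeff (m+2)
          = (w (m+3):ℂ) * (slSol f q w 1 (-(f 0:ℂ)) (m+3)).coeff (m+1) := hXmul _ _ (m+1)
      have t1 : (slSol f q w 1 (-(f 0:ℂ)) (m+3)).coeff (m+2) = 0 := z2 (m+2) (by omega)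
      have t2 : (slSol f q w 1 (-(f 0:ℂ)) (m+2)).coeff (m+2) = 0 := z1 (m+2) (by omega)
      have pr : slPr2 f w (m+2) = slPr2 f w (m+1) * (-(w (m+3):ℂ)/((f (m+3)):ℂ)) :=
        Finset.prod_range_succ _ (m+1)
      simp only [coeff_add, coeff_sub, coeff_C_mul, hx, t1, t2, c2, pr]
      ring

open ComplexConjugate in
lemma slKeyIdentity (a b c d p q r s : ℂ)
    (I1 : a * conj b - b * conj a = p * conj q - q * conj p)
    (I2 : c * conj d - d * conj c = r * conj s - s * conj r)
    (I3 : a * conj d - b * conj c = p * conj s - q * conj r) :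
    (p*d - r*b) * conj (a*s - c*q) - (-p*c + r*a) * conj (d*q - b*s)
      = (p*s - q*r) * conj (p*s - q*r) := by
  have I3c : conj a * d - conj b * c = conj p * s - conj q * r := by
    have h := congrArg (conj : ℂ → ℂ) I3
    simp only [map_sub, _root_.map_mul, Complex.conj_conj] at h
    linear_combination h
  simp only [map_sub, _root_.map_mul, map_add, map_neg]
  linear_combination (conj s * p) * I3c + (conj s * r) * I1
    - (conj q * r) * I3 + (conj q * p) * I2

open ComplexConjugate

/-- Fix a self-adjoint boundary condition `(A|B)` and set
`μ₁ = a₁₁b₂₂ - a₂₁b₁₂`, `μ₂ = a₂₂b₁₂ - a₁₂b₂₂`.  If `μ₁ ≠ 0` and `μ₂ ≠ 0`, then for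
every equation `ω = (1/f, q, w)` the problem `(ω, A|B)` has exactly `N-1` eigenvalues
when `1/f₀ = -μ₂/μ₁`, and exactly `N` eigenvalues when `1/f₀ ≠ -μ₂/μ₁`. -/
theorem eigenvalue_count_mu (N : ℕ) (hN : 2 ≤ N)
    (A B : Matrix (Fin 2) (Fin 2) ℂ)
    (hrank : (slAugment A B).rank = 2)
    (hsa : A * (!![0, 1; -1, 0] : Matrix (Fin 2) (Fin 2) ℂ) * Aᴴ
        = B * (!![0, 1; -1, 0] : Matrix (Fin 2) (Fin 2) ℂ) * Bᴴ)
    (hμ1 : A 0 0 * B 1 1 - A 1 0 * B 0 1 ≠ 0)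
    (hμ2 : A 1 1 * B 0 1 - A 0 1 * B 1 1 ≠ 0)
    (f q w : ℕ → ℝ) (hf : ∀ n ≤ N, f n ≠ 0) (hw : ∀ n, 1 ≤ n → n ≤ N → 0 < w n) :
    ((((f 0 : ℂ))⁻¹ = -(A 1 1 * B 0 1 - A 0 1 * B 1 1) / (A 0 0 * B 1 1 - A 1 0 * B 0 1) →
        slCharPoly N f q w A B ≠ 0 ∧
        Multiset.card (slCharPoly N f q w A B).roots = N - 1)) ∧
    ((((f 0 : ℂ))⁻¹ ≠ -(A 1 1 * B 0 1 - A 0 1 * B 1 1) / (A 0 0 * B 1 1 - A 1 0 * B 0 1) →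
        slCharPoly N f q w A B ≠ 0 ∧
        Multiset.card (slCharPoly N f q w A B).roots = N)) := by
  obtain ⟨M, rfl⟩ : ∃ M, N = M + 2 := ⟨N - 2, by omega⟩
  -- basic nonvanishing
  have hf0 : (f 0 : ℂ) ≠ 0 := Complex.ofReal_ne_zero.mpr (hf 0 (by omega))
  have hf1 : (f 1 : ℂ) ≠ 0 := Complex.ofReal_ne_zero.mpr (hf 1 (by omega))
  have hfN : (f (M+2) : ℂ) ≠ 0 := Complex.ofReal_ne_zero.mpr (hf (M+2) (by omega))
  have hw1R : 0 < w 1 := hw 1 (by omega) (by omega)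
  have hwNR : 0 < w (M+2) := hw (M+2) (by omega) (by omega)
  have hw1 : (w 1 : ℂ) ≠ 0 := Complex.ofReal_ne_zero.mpr (ne_of_gt hw1R)
  have hinv : (f 0:ℂ) * ((f 0:ℂ))⁻¹ = 1 := mul_inv_cancel₀ hf0
  -- self-adjointness scalar equations
  have h00 : (A * (!![0, 1; -1, 0] : Matrix (Fin 2) (Fin 2) ℂ) * Aᴴ) 0 0
      = (B * (!![0, 1; -1, 0] : Matrix (Fin 2) (Fin 2) ℂ) * Bᴴ) 0 0 := by rw [hsa]
  have h11 : (A * (!![0, 1; -1, 0] : Matrix (Fin 2) (Fin 2) ℂ) * Aᴴ) 1 1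
      = (B * (!![0, 1; -1, 0] : Matrix (Fin 2) (Fin 2) ℂ) * Bᴴ) 1 1 := by rw [hsa]
  have h01 : (A * (!![0, 1; -1, 0] : Matrix (Fin 2) (Fin 2) ℂ) * Aᴴ) 0 1
      = (B * (!![0, 1; -1, 0] : Matrix (Fin 2) (Fin 2) ℂ) * Bᴴ) 0 1 := by rw [hsa]
  simp [Matrix.mul_apply, Fin.sum_univ_two, Matrix.conjTranspose_apply] at h00 h11 h01
  have KI : (B 0 0 * A 1 1 - B 1 0 * A 0 1) * conj (A 0 0 * B 1 1 - A 1 0 * B 0 1)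
      - (-(B 0 0) * A 1 0 + B 1 0 * A 0 0) * conj (A 1 1 * B 0 1 - A 0 1 * B 1 1)
      = (B 0 0 * B 1 1 - B 0 1 * B 1 0) * conj (B 0 0 * B 1 1 - B 0 1 * B 1 0) := by
    have := slKeyIdentity (A 0 0) (A 0 1) (A 1 0) (A 1 1) (B 0 0) (B 0 1) (B 1 0) (B 1 1)
      (by linear_combination h00) (by linear_combination h11) (by linear_combination h01)
    simp only [map_sub, _root_.map_mul, map_add, map_neg] at this ⊢
    linear_combination this
  -- coefficients of the solutions
  have Sφ := slSol_coeff f q w 1 0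
  have Sψ := slSol_coeff f q w 0 1
  have hu1 : ((1:ℂ) + 0 / (f 0 : ℂ)) = 1 := by simp
  have hu2 : ((0:ℂ) + 1 / (f 0 : ℂ)) = ((f 0:ℂ))⁻¹ := by rw [zero_add, one_div]
  simp only [hu1, hu2, one_mul] at Sφ Sψ
  obtain ⟨φz2, φc2⟩ := Sφ (M+1)
  obtain ⟨φz3, φc3⟩ := Sφ (M+2)
  obtain ⟨ψz2, ψc2⟩ := Sψ (M+1)
  obtain ⟨ψz3, ψc3⟩ := Sψ (M+2)
  simp only [show M+1+1 = M+2 from rfl, show M+2+1 = M+3 from rfl] at φz2 φc2 φz3 φc3 ψz2 ψc2 ψz3 ψc3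
  obtain ⟨χz, χc⟩ := slChi_coeff f q w hf0 (M+1)
  simp only [show M+1+2 = M+3 from rfl] at χz χc
  have hΓ : slCharPoly (M+2) f q w A B
      = C (A.det + B.det)
        + C (B 0 0 * A 1 1 - B 1 0 * A 0 1) * slSol f q w 1 0 (M+2)
        + C (-(B 0 0) * A 1 0 + B 1 0 * A 0 0) * slSol f q w 0 1 (M+2)
        + C ((B 0 1 * A 1 1 - B 1 1 * A 0 1) * (f (M+2) : ℂ))
            * (slSol f q w 1 0 (M+3) - slSol f q w 1 0 (M+2))
        + C ((-(B 0 1) * A 1 0 + B 1 1 * A 0 0) * (f (M+2) : ℂ))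
            * (slSol f q w 0 1 (M+3) - slSol f q w 0 1 (M+2)) := rfl
  have cfhigh : ∀ k, M+2 < k → (slCharPoly (M+2) f q w A B).coeff k = 0 := by
    intro k hk
    rw [hΓ]
    simp only [coeff_add, coeff_sub, coeff_C_mul]
    rw [coeff_C_ne_zero (show k ≠ 0 by omega), φz2 k (by omega), ψz2 k (by omega),
      φz3 k (by omega), ψz3 k (by omega)]
    ring
  have cftop : (slCharPoly (M+2) f q w A B).coeff (M+2)
      = (f (M+2):ℂ) * slPr f w (M+2) * ((B 0 1 * A 1 1 - B 1 1 * A 0 1)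
          + (-(B 0 1) * A 1 0 + B 1 1 * A 0 0) * ((f 0:ℂ))⁻¹) := by
    rw [hΓ]
    simp only [coeff_add, coeff_sub, coeff_C_mul]
    rw [coeff_C_ne_zero (show M+2 ≠ 0 by omega), φz2 _ (by omega), ψz2 _ (by omega), φc3, ψc3]
    ring
  have cfsub : (slCharPoly (M+2) f q w A B).coeff (M+1)
      = (B 0 0 * A 1 1 - B 1 0 * A 0 1) * slPr f w (M+1)
        + (-(B 0 0) * A 1 0 + B 1 0 * A 0 0) * (((f 0:ℂ))⁻¹ * slPr f w (M+1))
        + (B 0 1 * A 1 1 - B 1 1 * A 0 1) * (f (M+2):ℂ)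
            * ((slSol f q w 1 0 (M+3)).coeff (M+1) - slPr f w (M+1))
        + (-(B 0 1) * A 1 0 + B 1 1 * A 0 0) * (f (M+2):ℂ)
            * ((slSol f q w 0 1 (M+3)).coeff (M+1) - ((f 0:ℂ))⁻¹ * slPr f w (M+1)) := by
    rw [hΓ]
    simp only [coeff_add, coeff_sub, coeff_C_mul]
    rw [coeff_C_ne_zero (show M+1 ≠ 0 by omega), φc2, ψc2]
    ring
  have hPrfac : ∀ k, k < M+2 → (-(w (k+1) : ℂ) / (f (k+1) : ℂ)) ≠ 0 := by
    intro k hk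
    apply div_ne_zero
    · rw [neg_ne_zero]
      exact Complex.ofReal_ne_zero.mpr (ne_of_gt (hw (k+1) (by omega) (by omega)))
    · exact Complex.ofReal_ne_zero.mpr (hf (k+1) (by omega))
  have hPrN : slPr f w (M+2) ≠ 0 := by
    rw [slPr]
    exact Finset.prod_ne_zero_iff.mpr fun k hk => hPrfac k (Finset.mem_range.mp hk)
  have hPr1 : slPr f w (M+1) ≠ 0 := by
    rw [slPr]
    exact Finset.prod_ne_zero_iff.mpr fun k hk => hPrfac k (by
      have := Finset.mem_range.mp hk; omega)
  have cardfun : ∀ p : Polynomial ℂ, Multiset.card p.roots = p.natDegree :=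
    fun p => IsAlgClosed.card_roots_eq_natDegree
  constructor
  · -- degenerate case
    intro h
    have hμrel : (A 0 0 * B 1 1 - A 1 0 * B 0 1)
        = -(f 0:ℂ) * (A 1 1 * B 0 1 - A 0 1 * B 1 1) := by
      rw [eq_div_iff hμ1] at h
      linear_combination (f 0:ℂ) * h - (A 0 0 * B 1 1 - A 1 0 * B 0 1) * hinv
    have topzero : (slCharPoly (M+2) f q w A B).coeff (M+2) = 0 := by
      rw [cftop]
      have hz : (B 0 1 * A 1 1 - B 1 1 * A 0 1)
          + (-(B 0 1) * A 1 0 + B 1 1 * A 0 0) * ((f 0:ℂ))⁻¹ = 0 := by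
        linear_combination ((f 0:ℂ))⁻¹ * hμrel - (A 1 1 * B 0 1 - A 0 1 * B 1 1) * hinv
      rw [hz, mul_zero]
    have degle : (slCharPoly (M+2) f q w A B).natDegree ≤ M+1 := by
      rw [natDegree_le_iff_coeff_eq_zero]
      intro k hk
      rcases Nat.lt_or_ge (M+2) k with h' | h'
      · exact cfhigh k h'
      · have : k = M+2 := by omega
        rw [this]; exact topzero
    -- subleading coefficient
    have hc22 : (-(B 0 1) * A 1 0 + B 1 1 * A 0 0)
        = -(f 0:ℂ) * (B 0 1 * A 1 1 - B 1 1 * A 0 1) := by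
      linear_combination hμrel
    have χlin : (slSol f q w 1 (-(f 0:ℂ)) (M+3)).coeff (M+1)
        = (slSol f q w 1 0 (M+3)).coeff (M+1)
          - (f 0:ℂ) * (slSol f q w 0 1 (M+3)).coeff (M+1) := by
      rw [slSol_lin]
      simp [coeff_sub, coeff_C_mul]
    have hχval : (slSol f q w 1 0 (M+3)).coeff (M+1)
        - (f 0:ℂ) * (slSol f q w 0 1 (M+3)).coeff (M+1)
        = (-(f 0:ℂ) / (f 1:ℂ)) * slPr2 f w (M+1) := by
      rw [← χlin]; exact χc
    have hXval : (slCharPoly (M+2) f q w A B).coeff (M+1)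
        = (B 0 0 * A 1 1 - B 1 0 * A 0 1) * slPr f w (M+1)
          + (-(B 0 0) * A 1 0 + B 1 0 * A 0 0) * (((f 0:ℂ))⁻¹ * slPr f w (M+1))
          + (B 0 1 * A 1 1 - B 1 1 * A 0 1) * (f (M+2):ℂ)
              * ((-(f 0:ℂ) / (f 1:ℂ)) * slPr2 f w (M+1)) := by
      rw [cfsub, hc22]
      linear_combination ((B 0 1 * A 1 1 - B 1 1 * A 0 1) * (f (M+2):ℂ)) * hχval
        + ((B 0 1 * A 1 1 - B 1 1 * A 0 1) * (f (M+2):ℂ) * slPr f w (M+1)) * hinv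
    have e1 : slPr2 f w (M+1) * (-(w 1:ℂ)) * (f (M+2):ℂ)
        = slPr f w (M+1) * (-(w (M+2):ℂ)) * (f 1:ℂ) := by
      have r2 : slPr f w (M+2) = slPr2 f w (M+1) * (-(w 1:ℂ) / (f 1:ℂ)) :=
        Finset.prod_range_succ' _ (M+1)
      have r1 : slPr f w (M+2) = slPr f w (M+1) * (-(w (M+2):ℂ) / (f (M+2):ℂ)) :=
        Finset.prod_range_succ _ (M+1)
      have h12 := r2.symm.trans r1
      field_simp at h12
      linear_combination h12
    have hμrelc : conj (A 0 0 * B 1 1 - A 1 0 * B 0 1)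
        = -(f 0:ℂ) * conj (A 1 1 * B 0 1 - A 0 1 * B 1 1) := by
      have hcongr := congrArg (conj : ℂ → ℂ) hμrel
      simp only [map_sub, _root_.map_mul, map_neg, Complex.conj_ofReal] at hcongr
      simp only [map_sub, _root_.map_mul]
      linear_combination hcongr
    have hinv1 : (f 1:ℂ) * ((f 1:ℂ))⁻¹ = 1 := mul_inv_cancel₀ hf1
    have hKey : (slCharPoly (M+2) f q w A B).coeff (M+1)
          * ((w 1:ℂ) * (f 1:ℂ) * conj (A 0 0 * B 1 1 - A 1 0 * B 0 1))
        = slPr f w (M+1) * (f 1:ℂ)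
          * ((w 1:ℂ) * ((B 0 0 * B 1 1 - B 0 1 * B 1 0) * conj (B 0 0 * B 1 1 - B 0 1 * B 1 0))
            + (w (M+2):ℂ) * ((A 0 0 * B 1 1 - A 1 0 * B 0 1)
                * conj (A 0 0 * B 1 1 - A 1 0 * B 0 1))) := by
      rw [hXval, div_eq_mul_inv]
      linear_combination (slPr f w (M+1) * (w 1:ℂ) * (f 1:ℂ)) * KI
        + ((-(B 0 0) * A 1 0 + B 1 0 * A 0 0) * ((f 0:ℂ))⁻¹ * slPr f w (M+1) * (w 1:ℂ) * (f 1:ℂ)) * hμrelc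
        - ((-(B 0 0) * A 1 0 + B 1 0 * A 0 0) * slPr f w (M+1) * (w 1:ℂ) * (f 1:ℂ)
            * conj (A 1 1 * B 0 1 - A 0 1 * B 1 1)) * hinv
        - (slPr f w (M+1) * (f 1:ℂ) * (w (M+2):ℂ)
            * conj (A 0 0 * B 1 1 - A 1 0 * B 0 1)) * hμrel
        - ((B 0 1 * A 1 1 - B 1 1 * A 0 1) * (f 0:ℂ)
            * conj (A 0 0 * B 1 1 - A 1 0 * B 0 1) * (f (M+2):ℂ) * slPr2 f w (M+1) * (w 1:ℂ)) * hinv1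
        + ((B 0 1 * A 1 1 - B 1 1 * A 0 1) * (f 0:ℂ)
            * conj (A 0 0 * B 1 1 - A 1 0 * B 0 1)) * e1
    have hpos : (w 1:ℂ) * ((B 0 0 * B 1 1 - B 0 1 * B 1 0) * conj (B 0 0 * B 1 1 - B 0 1 * B 1 0))
          + (w (M+2):ℂ) * ((A 0 0 * B 1 1 - A 1 0 * B 0 1)
              * conj (A 0 0 * B 1 1 - A 1 0 * B 0 1)) ≠ 0 := by
      rw [Complex.mul_conj, Complex.mul_conj]
      rw [show ((w 1:ℂ)) * (Complex.normSq (B 0 0 * B 1 1 - B 0 1 * B 1 0) : ℂ)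
          + ((w (M+2):ℂ)) * (Complex.normSq (A 0 0 * B 1 1 - A 1 0 * B 0 1) : ℂ)
          = ((w 1 * Complex.normSq (B 0 0 * B 1 1 - B 0 1 * B 1 0)
            + w (M+2) * Complex.normSq (A 0 0 * B 1 1 - A 1 0 * B 0 1) : ℝ) : ℂ) by push_cast; ring]
      rw [Complex.ofReal_ne_zero]
      have h1 : 0 < Complex.normSq (A 0 0 * B 1 1 - A 1 0 * B 0 1) := Complex.normSq_pos.mpr hμ1
      have h2 : 0 ≤ Complex.normSq (B 0 0 * B 1  1 - B 0 1 * B 1 0) := Complex.normSq_nonneg _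
      positivity
    have Xne : (slCharPoly (M+2) f q w A B).coeff (M+1) ≠ 0 := by
      intro h0
      rw [h0, zero_mul] at hKey
      exact (mul_ne_zero (mul_ne_zero hPr1 hf1) hpos) hKey.symm
    have hdeg : (slCharPoly (M+2) f q w A B).natDegree = M+1 :=
      le_antisymm degle (le_natDegree_of_ne_zero Xne)
    refine ⟨fun h0 => Xne (by rw [h0]; simp), ?_⟩
    rw [cardfun, hdeg]
    omega
  · -- nondegenerate case
    intro h
    have topne : (slCharPoly (M+2) f q w A B).coeff (M+2) ≠ 0 := by
      rw [cftop]
      refine mul_ne_zero (mul_ne_zero hfN hPrN) ?_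
      intro heq
      apply h
      rw [eq_div_iff hμ1]
      linear_combination heq
    have hdeg : (slCharPoly (M+2) f q w A B).natDegree = M+2 := by
      refine le_antisymm ?_ (le_natDegree_of_ne_zero topne)
      rw [natDegree_le_iff_coeff_eq_zero]
      exact cfhigh
    refine ⟨fun h0 => topne (by rw [h0]; simp), ?_⟩
    rw [cardfun, hdeg]
end

section
/- For a coupled self-adjoint boundary condition [e^{iγ}K | -I] with γ∈[0,π), K∈SL(2,ℝ), and a fixed equation with coefficient f_0, the discrete Sturm-Liouville problem has exactly N-1 eigenvalues if k_{12}≠0 and k_{11}=f_0 k_{12}, and exactly N eigenvalues otherwise (i.e., if k_{12}=0, or k_{12}≠0 and k_{11}≠f_0 k_{12}). -/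
open Polynomial Matrix Real

open Finset in
noncomputable def Pc (f w : ℕ → ℝ) (j : ℕ) : ℂ := -((w j : ℂ)) * ((f j : ℂ))⁻¹

open Finset in
noncomputable def Ac (f w : ℕ → ℝ) (n : ℕ) : ℂ := ∏ j ∈ Finset.Ico 1 n, Pc f w j

lemma slSol_deg (f q w : ℕ → ℝ) (y0 d0 : ℂ) :
    ∀ n : ℕ, (slSol f q w y0 d0 n).natDegree ≤ n - 1 ∧
      (slSol f q w y0 d0 (n+1)).natDegree ≤ n := by
  intro n
  induction n with
  | zero => constructor <;> simp [slSol]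
  | succ m ih =>
    refine ⟨ih.2, ?_⟩
    show (slSol f q w y0 d0 (m+2)).natDegree ≤ m + 1
    rw [slSol]
    refine le_trans (natDegree_add_le _ _) (max_le (le_trans ih.2 (by omega)) ?_)
    refine le_trans (natDegree_C_mul_le _ _) ?_
    refine le_trans (natDegree_sub_le _ _) (max_le ?_ ?_)
    · refine le_trans (natDegree_add_le _ _) (max_le ?_ ?_)
      · refine le_trans (natDegree_C_mul_le _ _) ?_
        refine le_trans (natDegree_sub_le _ _) (max_le (le_trans ih.2 (by omega)) ?_)
        exact le_trans ih.1 (by omega)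
      · exact le_trans (natDegree_C_mul_le _ _) (le_trans ih.2 (by omega))
    · refine le_trans (natDegree_mul_le) ?_
      have : (X * C ((w (m+1) : ℝ) : ℂ)).natDegree ≤ 1 := by
        refine le_trans (natDegree_mul_le) ?_
        simp
      omega

lemma slSol_coeff_top (f q w : ℕ → ℝ) (y0 d0 : ℂ) :
    ∀ n : ℕ, (slSol f q w y0 d0 (n+1)).coeff n = (y0 + d0 / (f 0 : ℂ)) * Ac f w (n+1) := by
  intro n
  induction n with
  | zero => simp [slSol, Ac]
  | succ m ih =>
    have hd1 : (slSol f q w y0 d0 (m+1)).natDegree ≤ m := (slSol_deg f q w y0 d0 m).2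
    have hd0 : (slSol f q w y0 d0 m).natDegree ≤ m := le_trans (slSol_deg f q w y0 d0 m).1 (by omega)
    have z1 : (slSol f q w y0 d0 (m+1)).coeff (m+1) = 0 :=
      coeff_eq_zero_of_natDegree_lt (by omega)
    have z0 : (slSol f q w y0 d0 m).coeff (m+1) = 0 :=
      coeff_eq_zero_of_natDegree_lt (by omega)
    show (slSol f q w y0 d0 (m+2)).coeff (m+1) = _
    rw [slSol]
    have hx : (X * C (((w (m+1) : ℝ)) : ℂ) * slSol f q w y0 d0 (m+1)).coeff (m+1)
        = (w (m+1) : ℂ) * (slSol f q w y0 d0 (m+1)).coeff m := by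
      rw [show (X * C (((w (m+1) : ℝ)) : ℂ) * slSol f q w y0 d0 (m+1))
            = C (((w (m+1) : ℝ)) : ℂ) * (X * slSol f q w y0 d0 (m+1)) by ring,
          coeff_C_mul, coeff_X_mul]
    rw [coeff_add, coeff_C_mul, coeff_sub, coeff_add, coeff_C_mul, coeff_sub, coeff_C_mul, hx,
      z1, z0, ih]
    have hA : Ac f w (m+2) = Ac f w (m+1) * Pc f w (m+1) := by
      rw [Ac, Ac, Finset.prod_Ico_succ_top (by omega)]
    rw [hA, Pc]
    ring

lemma slSol_D (f q w : ℕ → ℝ) (hf0 : (f 0 : ℝ) ≠ 0) :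
    ∀ n : ℕ, (f 0 : ℂ) * (slSol f q w 0 1 (n+2)).coeff n - (slSol f q w 1 0 (n+2)).coeff n
      = (f 0 : ℂ) * ((f 1 : ℂ))⁻¹ * ∏ j ∈ Finset.Ico 2 (n+2), Pc f w j := by
  have hf0c : ((f 0 : ℝ) : ℂ) ≠ 0 := Complex.ofReal_ne_zero.mpr hf0
  intro n
  induction n with
  | zero =>
    have e : ∀ y0 d0 : ℂ, slSol f q w y0 d0 2 =
      C (y0 + d0/(f 0:ℂ)) + C ((f 1 : ℂ))⁻¹ *
        (C ((f 0 : ℂ)) * (C (y0 + d0/(f 0:ℂ)) - C y0)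
          + C ((q 1 : ℂ)) * C (y0 + d0/(f 0:ℂ))
          - X * C ((w 1 : ℂ)) * C (y0 + d0/(f 0:ℂ))) := fun _ _ => rfl
    show (f 0 : ℂ) * (slSol f q w 0 1 2).coeff 0 - (slSol f q w 1 0 2).coeff 0 = _
    rw [e, e]
    simp only [coeff_add, coeff_sub, coeff_C_mul, mul_coeff_zero, coeff_X_zero, coeff_C]
    simp only [Finset.Ico_self, Finset.prod_empty]
    simp only [if_true]
    have h1 : (f 0 : ℂ) * (f 0 : ℂ)⁻¹ = 1 := mul_inv_cancel₀ hf0c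
    field_simp
    ring
  | succ m ih =>
    have key : ∀ y0 d0 : ℂ, (slSol f q w y0 d0 (m+3)).coeff (m+1)
        = (y0 + d0 / (f 0 : ℂ)) * Ac f w (m+2)
          + ((f (m+2) : ℂ))⁻¹ * ( ((f (m+1) : ℂ) + (q (m+2) : ℂ)) * ((y0 + d0 / (f 0 : ℂ)) * Ac f w (m+2))
              - (w (m+2) : ℂ) * (slSol f q w y0 d0 (m+2)).coeff m ) := by
      intro y0 d0
      have hd1 : (slSol f q w y0 d0 (m+2)).natDegree ≤ m+1 := (slSol_deg f q w y0 d0 (m+1)).2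
      have hd0 : (slSol f q w y0 d0 (m+1)).natDegree ≤ m := (slSol_deg f q w y0 d0 m).2
      have z0 : (slSol f q w y0 d0 (m+1)).coeff (m+1) = 0 :=
        coeff_eq_zero_of_natDegree_lt (by omega)
      have htop : (slSol f q w y0 d0 (m+2)).coeff (m+1) = (y0 + d0 / (f 0 : ℂ)) * Ac f w (m+2) :=
        slSol_coeff_top f q w y0 d0 (m+1)
      show (slSol f q w y0 d0 (m+3)).coeff (m+1) = _
      rw [slSol]
      have hx : (X * C (((w (m+2) : ℝ)) : ℂ) * slSol f q w y0 d0 (m+2)).coeff (m+1)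
          = (w (m+2) : ℂ) * (slSol f q w y0 d0 (m+2)).coeff m := by
        rw [show (X * C (((w (m+2) : ℝ)) : ℂ) * slSol f q w y0 d0 (m+2))
              = C (((w (m+2) : ℝ)) : ℂ) * (X * slSol f q w y0 d0 (m+2)) by ring,
            coeff_C_mul, coeff_X_mul]
      rw [coeff_add, coeff_C_mul, coeff_sub, coeff_add, coeff_C_mul, coeff_sub, coeff_C_mul, hx,
        z0, htop]
      ring
    rw [key, key]
    have hprod : ∏ j ∈ Finset.Ico 2 (m+1+2), Pc f w j
        = (∏ j ∈ Finset.Ico 2 (m+2), Pc f w j) * Pc f w (m+2) := by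
      rw [show m+1+2 = m+2+1 from rfl]
      exact Finset.prod_Ico_succ_top (by omega) _
    rw [hprod]
    rw [show (0 : ℂ) + 1 / (f 0 : ℂ) = (f 0 : ℂ)⁻¹ by ring,
        show (1 : ℂ) + 0 / (f 0 : ℂ) = 1 by ring]
    rw [Pc]
    have h1 : (f 0 : ℂ) * (f 0 : ℂ)⁻¹ = 1 := mul_inv_cancel₀ hf0c
    linear_combination (-((f (m+2) :ℂ))⁻¹ * (w (m+2) : ℂ)) * ih
      + (((f (m+1) : ℂ) + (q (m+2) : ℂ)) * ((f (m+2) : ℂ))⁻¹ * Ac f w (m+2) + Ac f w (m+2)) * h1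

lemma slCharPoly_eq (N : ℕ) (f q w : ℕ → ℝ) (A B : Matrix (Fin 2) (Fin 2) ℂ) :
    slCharPoly N f q w A B =
      C (A.det + B.det) + C (B 0 0 * A 1 1 - B 1 0 * A 0 1) * slSol f q w 1 0 N
        + C (-(B 0 0) * A 1 0 + B 1 0 * A 0 0) * slSol f q w 0 1 N
        + C ((B 0 1 * A 1 1 - B 1 1 * A 0 1) * (f N : ℂ)) * (slSol f q w 1 0 (N+1) - slSol f q w 1 0 N)
        + C ((-(B 0 1) * A 1 0 + B 1 1 * A 0 0) * (f N : ℂ)) * (slSol f q w 0 1 (N+1) - slSol f q w 0 1 N) := rfl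

set_option maxHeartbeats 1000000 in
/-- For a coupled self-adjoint boundary condition `[e^{iγ}K | -I]` with `γ ∈ [0,π)`,
`K ∈ SL(2,ℝ)`, the problem has exactly `N-1` eigenvalues if `k₁₂ ≠ 0` and
`k₁₁ = f₀k₁₂`, and exactly `N` eigenvalues otherwise. -/
theorem eigenvalue_count_coupled (N : ℕ) (hN : 2 ≤ N) (f q w : ℕ → ℝ)
    (hf : ∀ n ≤ N, f n ≠ 0) (hw : ∀ n, 1 ≤ n → n ≤ N → 0 < w n)
    (γ : ℝ) (hγ : γ ∈ Set.Ico 0 Real.pi)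
    (K : Matrix (Fin 2) (Fin 2) ℝ) (hK : K.det = 1) :
    ((K 0 1 ≠ 0 ∧ K 0 0 = f 0 * K 0 1) →
      slCharPoly N f q w
          (Complex.exp (γ * Complex.I) • K.map (Complex.ofReal ·)) (-1) ≠ 0 ∧
      Multiset.card (slCharPoly N f q w
          (Complex.exp (γ * Complex.I) • K.map (Complex.ofReal ·)) (-1)).roots = N - 1) ∧
    (¬ (K 0 1 ≠ 0 ∧ K 0 0 = f 0 * K 0 1) →
      slCharPoly N f q w
          (Complex.exp (γ * Complex.I) • K.map (Complex.ofReal ·)) (-1) ≠ 0 ∧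
      Multiset.card (slCharPoly N f q w
          (Complex.exp (γ * Complex.I) • K.map (Complex.ofReal ·)) (-1)).roots = N) := by
  obtain ⟨M, rfl⟩ : ∃ M, N = M + 2 := ⟨N - 2, by omega⟩
  have hf0 : f 0 ≠ 0 := hf 0 (by omega)
  have hf1 : f 1 ≠ 0 := hf 1 (by omega)
  have hfN : f (M+2) ≠ 0 := hf (M+2) le_rfl
  have hf0c : ((f 0 : ℝ) : ℂ) ≠ 0 := Complex.ofReal_ne_zero.mpr hf0
  have hf1c : ((f 1 : ℝ) : ℂ) ≠ 0 := Complex.ofReal_ne_zero.mpr hf1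
  have hfNc : ((f (M+2) : ℝ) : ℂ) ≠ 0 := Complex.ofReal_ne_zero.mpr hfN
  have hw1 : 0 < w 1 := hw 1 le_rfl (by omega)
  have hwN : 0 < w (M+2) := hw (M+2) (by omega) le_rfl
  set E : ℂ := Complex.exp (γ * Complex.I) with hEdef
  have hE : E ≠ 0 := Complex.exp_ne_zero _
  have hdetK : K 0 0 * K 1 1 - K 0 1 * K 1 0 = 1 := by
    rw [Matrix.det_fin_two] at hK; linarith
  set Γ : Polynomial ℂ :=
    slCharPoly (M+2) f q w (E • K.map (Complex.ofReal ·)) (-1) with hΓdef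
  -- matrix entries
  have hA : ∀ i j, (E • K.map (Complex.ofReal ·)) i j = E * ((K i j : ℝ) : ℂ) := by
    intro i j
    simp [Matrix.smul_apply, Matrix.map_apply, smul_eq_mul]
  have hB : ∀ i j : Fin 2, (-1 : Matrix (Fin 2) (Fin 2) ℂ) i j
      = -(if i = j then 1 else 0) := by
    intro i j
    simp [Matrix.neg_apply, Matrix.one_apply]
  -- coefficient extraction
  have hcoeff : ∀ k : ℕ, 0 < k → Γ.coeff k =
      -(E * (K 1 1 : ℂ)) * (slSol f q w 1 0 (M+2)).coeff k
      + E * (K 1 0 : ℂ) * (slSol f q w 0 1 (M+2)).coeff k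
      + E * (K 0 1 : ℂ) * (f (M+2) : ℂ) *
          ((slSol f q w 1 0 (M+2+1)).coeff k - (slSol f q w 1 0 (M+2)).coeff k)
      - E * (K 0 0 : ℂ) * (f (M+2) : ℂ) *
          ((slSol f q w 0 1 (M+2+1)).coeff k - (slSol f q w 0 1 (M+2)).coeff k) := by
    intro k hk
    rw [hΓdef, slCharPoly_eq]
    rw [coeff_add, coeff_add, coeff_add, coeff_add, coeff_C_mul, coeff_C_mul, coeff_C_mul,
      coeff_C_mul, coeff_C, coeff_sub, coeff_sub, if_neg hk.ne']
    rw [hA, hA, hA, hA]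
    rw [hB 0 0, hB 1 0, hB 0 1, hB 1 1]
    norm_num
    ring
  -- top coefficients
  have hφtop : ∀ n : ℕ, (slSol f q w 1 0 (n+1)).coeff n = Ac f w (n+1) := by
    intro n; rw [slSol_coeff_top]; norm_num
  have hψtop : ∀ n : ℕ, (slSol f q w 0 1 (n+1)).coeff n = ((f 0 : ℂ))⁻¹ * Ac f w (n+1) := by
    intro n; rw [slSol_coeff_top]; rw [zero_add, one_div]
  have ha2 : (slSol f q w 1 0 (M+2)).coeff (M+1) = Ac f w (M+2) := hφtop (M+1)
  have hb2 : (slSol f q w 0 1 (M+2)).coeff (M+1) = ((f 0:ℂ))⁻¹ * Ac f w (M+2) := hψtop (M+1)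
  have ha3 : (slSol f q w 1 0 (M+2+1)).coeff (M+2) = Ac f w (M+2+1) := hφtop (M+2)
  have hb3 : (slSol f q w 0 1 (M+2+1)).coeff (M+2) = ((f 0:ℂ))⁻¹ * Ac f w (M+2+1) := hψtop (M+2)
  have hz2φ : (slSol f q w 1 0 (M+2)).coeff (M+2) = 0 :=
    coeff_eq_zero_of_natDegree_lt (lt_of_le_of_lt ((slSol_deg f q w 1 0 (M+1)).2) (by omega))
  have hz2ψ : (slSol f q w 0 1 (M+2)).coeff (M+2) = 0 :=
    coeff_eq_zero_of_natDegree_lt (lt_of_le_of_lt ((slSol_deg f q w 0 1 (M+1)).2) (by omega))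
  -- nonzero products
  have hPcne : ∀ j : ℕ, 1 ≤ j → j ≤ M+2 → Pc f w j ≠ 0 := by
    intro j h1 h2
    apply mul_ne_zero
    · exact neg_ne_zero.mpr (Complex.ofReal_ne_zero.mpr (hw j h1 h2).ne')
    · exact inv_ne_zero (Complex.ofReal_ne_zero.mpr (hf j h2))
  have hAcne : ∀ n : ℕ, n ≤ M + 3 → Ac f w n ≠ 0 := by
    intro n hn
    rw [Ac]
    apply Finset.prod_ne_zero_iff.mpr
    intro j hj
    rw [Finset.mem_Ico] at hj
    exact hPcne j hj.1 (by omega)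
  have hQ2ne : (∏ j ∈ Finset.Ico 2 (M+2), Pc f w j) ≠ 0 := by
    apply Finset.prod_ne_zero_iff.mpr
    intro j hj
    rw [Finset.mem_Ico] at hj
    exact hPcne j (by omega) (by omega)
  -- degree bound
  have hdeg : Γ.natDegree ≤ M + 2 := by
    rw [hΓdef, slCharPoly_eq]
    have d1 : (slSol f q w 1 0 (M+2)).natDegree ≤ M+1 := (slSol_deg f q w 1 0 (M+1)).2
    have d2 : (slSol f q w 0 1 (M+2)).natDegree ≤ M+1 := (slSol_deg f q w 0 1 (M+1)).2
    have d3 : (slSol f q w 1 0 (M+2+1)).natDegree ≤ M+2 := (slSol_deg f q w 1 0 (M+2)).2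
    have d4 : (slSol f q w 0 1 (M+2+1)).natDegree ≤ M+2 := (slSol_deg f q w 0 1 (M+2)).2
    refine le_trans (natDegree_add_le _ _) (max_le ?_ ?_)
    · refine le_trans (natDegree_add_le _ _) (max_le ?_ ?_)
      · refine le_trans (natDegree_add_le _ _) (max_le ?_ ?_)
        · refine le_trans (natDegree_add_le _ _) (max_le ?_ ?_)
          · exact le_trans (le_of_eq (natDegree_C _)) (by omega)
          · exact le_trans (natDegree_C_mul_le _ _) (by omega)
        · exact le_trans (natDegree_C_mul_le _ _) (by omega)
      · refine le_trans (natDegree_C_mul_le _ _) ?_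
        exact le_trans (natDegree_sub_le _ _) (by simp; omega)
    · refine le_trans (natDegree_C_mul_le _ _) ?_
      exact le_trans (natDegree_sub_le _ _) (by simp; omega)
  -- coefficient at M+2
  have hvalN : Γ.coeff (M+2) =
      E * (f (M+2) : ℂ) * Ac f w (M+2+1) * ((K 0 1 : ℂ) - (K 0 0 : ℂ) * ((f 0 : ℂ))⁻¹) := by
    rw [hcoeff (M+2) (by omega), hz2φ, hz2ψ, ha3, hb3]
    ring
  have hcard : ∀ p : Polynomial ℂ, Multiset.card p.roots = p.natDegree := fun p =>
    Polynomial.splits_iff_card_roots.mp (IsAlgClosed.splits p)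
  constructor
  · -- case 1 : K 0 1 ≠ 0 and K 0 0 = f 0 * K 0 1
    rintro ⟨hk12, hk11⟩
    have hk11c : (K 0 0 : ℂ) = (f 0 : ℂ) * (K 0 1 : ℂ) := by exact_mod_cast congrArg Complex.ofReal hk11
    have hcN0 : Γ.coeff (M+2) = 0 := by
      rw [hvalN, hk11c]
      field_simp
      ring
    -- value at M+1
    have hD : (f 0:ℂ) * (slSol f q w 0 1 (M+2+1)).coeff (M+1)
        - (slSol f q w 1 0 (M+2+1)).coeff (M+1)
        = (f 0:ℂ) * ((f 1:ℂ))⁻¹ * ∏ j ∈ Finset.Ico 2 (M+2+1), Pc f w j := slSol_D f q w hf0 (M+1)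
    have hQsplit : ∏ j ∈ Finset.Ico 2 (M+2+1), Pc f w j
        = (∏ j ∈ Finset.Ico 2 (M+2), Pc f w j) * Pc f w (M+2) :=
      Finset.prod_Ico_succ_top (by omega) _
    have hAsplit : Ac f w (M+2) = Pc f w 1 * ∏ j ∈ Finset.Ico 2 (M+2), Pc f w j := by
      rw [Ac]
      exact Finset.prod_eq_prod_Ico_succ_bot (by omega) _
    have hφb : (slSol f q w 1 0 (M+2+1)).coeff (M+1)
        = (f 0:ℂ) * (slSol f q w 0 1 (M+2+1)).coeff (M+1)
          - (f 0:ℂ) * ((f 1:ℂ))⁻¹ * ((∏ j ∈ Finset.Ico 2 (M+2), Pc f w j) * Pc f w (M+2)) := by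
      rw [← hQsplit]; linear_combination -hD
    have hval1 : Γ.coeff (M+1) =
        E * (∏ j ∈ Finset.Ico 2 (M+2), Pc f w j) * ((f 1:ℂ))⁻¹ * ((f 0:ℂ))⁻¹ *
          (((w 1 : ℂ)) * ((f 0:ℂ) * (K 1 1:ℂ) - (K 1 0:ℂ))
            + (K 0 1:ℂ) * (f 0:ℂ)^2 * (w (M+2):ℂ)) := by
      rw [hcoeff (M+1) (by omega), ha2, hb2, hφb, hk11c, hAsplit]
      rw [show Pc f w 1 = -((w 1 : ℝ) : ℂ) * (((f 1 : ℝ) : ℂ))⁻¹ from rfl,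
          show Pc f w (M+2) = -((w (M+2) : ℝ) : ℂ) * (((f (M+2) : ℝ) : ℂ))⁻¹ from rfl]
      have h0 : ((f 0:ℝ):ℂ) * (((f 0:ℝ):ℂ))⁻¹ = 1 := mul_inv_cancel₀ hf0c
      have hNN : ((f (M+2):ℝ):ℂ) * (((f (M+2):ℝ):ℂ))⁻¹ = 1 := mul_inv_cancel₀ hfNc
      linear_combination
        (-(E * (∏ j ∈ Finset.Ico 2 (M+2), Pc f w j) * (((f 1:ℝ):ℂ))⁻¹ *
          ((K 1 1:ℂ) * (w 1:ℂ) + (K 0 1:ℂ) * ((f (M+2):ℝ):ℂ) * (w 1:ℂ)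
            + (K 0 1:ℂ) * ((f 0:ℝ):ℂ) * (w (M+2):ℂ)))) * h0
        + (E * (∏ j ∈ Finset.Ico 2 (M+2), Pc f w j) * (((f 1:ℝ):ℂ))⁻¹ *
            ((K 0 1:ℂ) * ((f 0:ℝ):ℂ) * (w (M+2):ℂ))) * hNN
    have hrne : w 1 * (f 0 * K 1 1 - K 1 0) + K 0 1 * (f 0)^2 * w (M+2) ≠ 0 := by
      intro h0
      have key : K 0 1 * (w 1 * (f 0 * K 1 1 - K 1 0) + K 0 1 * (f 0)^2 * w (M+2))
          = w 1 + (K 0 1 * f 0)^2 * w (M+2) := by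
        linear_combination w 1 * hdetK - w 1 * K 1 1 * hk11
      rw [h0, mul_zero] at key
      nlinarith [sq_nonneg (K 0 1 * f 0), hw1, hwN]
    have hrc : (((w 1 : ℝ)) * ((f 0:ℝ) * (K 1 1:ℝ) - (K 1 0:ℝ))
        + (K 0 1:ℝ) * (f 0:ℝ)^2 * (w (M+2):ℝ) : ℂ) ≠ 0 := by
      rw [show (((w 1 : ℂ)) * ((f 0:ℂ) * (K 1 1:ℂ) - (K 1 0:ℂ))
          + (K 0 1:ℂ) * (f 0:ℂ)^2 * (w (M+2):ℂ))
          = ((w 1 * (f 0 * K 1 1 - K 1 0) + K 0 1 * (f 0)^2 * w (M+2) : ℝ) : ℂ) by push_cast; ring]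
      exact Complex.ofReal_ne_zero.mpr hrne
    have hc1ne : Γ.coeff (M+1) ≠ 0 := by
      rw [hval1]
      exact mul_ne_zero (mul_ne_zero (mul_ne_zero (mul_ne_zero hE hQ2ne)
        (inv_ne_zero hf1c)) (inv_ne_zero hf0c)) hrc
    have hΓne : Γ ≠ 0 := fun h => hc1ne (by rw [h, coeff_zero])
    have hdeg1 : Γ.natDegree ≤ M + 1 := by
      rw [natDegree_le_iff_coeff_eq_zero]
      intro m hm
      rcases Nat.lt_or_ge (M+2) m with h | h
      · exact coeff_eq_zero_of_natDegree_lt (lt_of_le_of_lt hdeg h)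
      · have : m = M + 2 := by omega
        rw [this]; exact hcN0
    have hdeg1' : Γ.natDegree = M + 1 :=
      le_antisymm hdeg1 (le_natDegree_of_ne_zero hc1ne)
    refine ⟨hΓne, ?_⟩
    rw [hcard, hdeg1']
    omega
  · -- case 2
    intro hnot
    have hne : K 0 1 - K 0 0 / f 0 ≠ 0 := by
      intro h0
      have h00 : K 0 0 = f 0 * K 0 1 := by field_simp at h0; linarith
      rcases eq_or_ne (K 0 1) 0 with h12 | h12
      · rw [h12, mul_zero] at h00
        rw [h00, h12] at hdetK
        simp at hdetK
      · exact hnot ⟨h12, h00⟩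
    have hnec : ((K 0 1 : ℂ) - (K 0 0 : ℂ) * ((f 0 : ℂ))⁻¹) ≠ 0 := by
      rw [show ((K 0 1 : ℂ) - (K 0 0 : ℂ) * ((f 0 : ℂ))⁻¹)
          = ((K 0 1 - K 0 0 / f 0 : ℝ) : ℂ) by push_cast; ring]
      exact Complex.ofReal_ne_zero.mpr hne
    have hcNne : Γ.coeff (M+2) ≠ 0 := by
      rw [hvalN]
      exact mul_ne_zero (mul_ne_zero (mul_ne_zero hE hfNc) (hAcne (M+3) le_rfl)) hnec
    have hΓne : Γ ≠ 0 := fun h => hcNne (by rw [h, coeff_zero])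
    have hdeg2 : Γ.natDegree = M + 2 :=
      le_antisymm hdeg (le_natDegree_of_ne_zero hcNne)
    exact ⟨hΓne, by rw [hcard, hdeg2]⟩
end

section
/- For the separated boundary condition S_{α,β} (cos α·y_0 - sin α·f_0Δy_0 = 0, cos β·y_N - sin β·f_NΔy_N = 0) with fixed equation data and fixed β_0∈(0,π), and for each n, the n-th eigenvalue function α ↦ λ_n(S_{α,β_0}) is strictly decreasing on each of the intervals [0,ξ) and (ξ,π), where ξ is the unique angle in (0,π) with cos ξ + f_0 sin ξ = 0, and satisfies lim_{α→π^-} λ_n(α) = λ_n(0) for all 0≤n≤N-1. -/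
open Polynomial Matrix Real Filter

/-- The real zeros of `Γ` (with multiplicity), listed in increasing order. -/
noncomputable def eigList (Γ : Polynomial ℂ) : List ℝ :=
  ((Γ.roots.filter (fun z => z.im = 0)).map Complex.re).sort (· ≤ ·)

/-- The `n`-th eigenvalue (0-indexed, in increasing order, with multiplicity). -/
noncomputable def nthEig (Γ : Polynomial ℂ) (n : ℕ) : ℝ :=
  (eigList Γ).getD n 0

/-- The `A`-matrix of the separated boundary condition `S_{α,β}`. -/
noncomputable def sepA (α : ℝ) : Matrix (Fin 2) (Fin 2) ℂ :=
  !![(Real.cos α : ℂ), -(Real.sin α : ℂ); 0, 0]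

/-- The `B`-matrix of the separated boundary condition `S_{α,β}`. -/
noncomputable def sepB (β : ℝ) : Matrix (Fin 2) (Fin 2) ℂ :=
  !![0, 0; (Real.cos β : ℂ), -(Real.sin β : ℂ)]

namespace SLaux


noncomputable def Pr (m : ℕ) (g : ℕ → ℝ) : Polynomial ℝ :=
  ∏ i ∈ Finset.range m, (X - C (g i))

lemma Pr_monic (m : ℕ) (g : ℕ → ℝ) : (Pr m g).Monic :=
  monic_prod_of_monic _ _ fun i _ => monic_X_sub_C (g i)

lemma Pr_ne_zero (m : ℕ) (g : ℕ → ℝ) : Pr m g ≠ 0 := (Pr_monic m g).ne_zero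

lemma Pr_natDegree (m : ℕ) (g : ℕ → ℝ) : (Pr m g).natDegree = m := by
  rw [Pr, natDegree_prod _ _ (fun i _ => X_sub_C_ne_zero (g i))]
  simp [natDegree_X_sub_C]

lemma Pr_degree (m : ℕ) (g : ℕ → ℝ) : (Pr m g).degree = m := by
  rw [degree_eq_natDegree (Pr_ne_zero m g), Pr_natDegree]

lemma Pr_eval (m : ℕ) (g : ℕ → ℝ) (x : ℝ) :
    (Pr m g).eval x = ∏ i ∈ Finset.range m, (x - g i) := by
  simp [Pr, eval_prod]

lemma prod_neg_sign {g : ℕ → ℝ} (s : Finset ℕ) (h : ∀ i ∈ s, g i < 0) :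
    0 < (-1 : ℝ) ^ s.card * ∏ i ∈ s, g i := by
  have h1 : (-1 : ℝ) ^ s.card * ∏ i ∈ s, g i = ∏ i ∈ s, (-(g i)) := by
    rw [← Finset.prod_const (-1 : ℝ), ← Finset.prod_mul_distrib]
    simp
  rw [h1]
  exact Finset.prod_pos fun i hi => neg_pos.mpr (h i hi)

lemma eval_sign {k j : ℕ} (hj : j ≤ k) (g : ℕ → ℝ) (x : ℝ)
    (h1 : ∀ i, i < j → g i < x) (h2 : ∀ i, j ≤ i → i < k → x < g i) :
    0 < (-1 : ℝ) ^ (k - j) * ∏ i ∈ Finset.range k, (x - g i) := by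
  rw [← Finset.prod_range_mul_prod_Ico _ hj]
  have hpos : 0 < ∏ i ∈ Finset.range j, (x - g i) :=
    Finset.prod_pos fun i hi => sub_pos.mpr (h1 i (Finset.mem_range.mp hi))
  have hneg : 0 < (-1 : ℝ) ^ (Finset.Ico j k).card * ∏ i ∈ Finset.Ico j k, (x - g i) :=
    prod_neg_sign _ fun i hi => by
      obtain ⟨hi1, hi2⟩ := Finset.mem_Ico.mp hi
      exact sub_neg.mpr (h2 i hi1 hi2)
  rw [Nat.card_Ico] at hneg
  calc (0:ℝ) < (∏ i ∈ Finset.range j, (x - g i)) *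
      ((-1 : ℝ) ^ (k - j) * ∏ i ∈ Finset.Ico j k, (x - g i)) := mul_pos hpos hneg
  _ = (-1 : ℝ) ^ (k - j) * ((∏ i ∈ Finset.range j, (x - g i)) * ∏ i ∈ Finset.Ico j k, (x - g i)) := by
      ring

lemma prod_dvd_of_roots : ∀ (d : ℕ) (F : Polynomial ℝ) (g : ℕ → ℝ),
    (∀ i j, i < d → j < d → i ≠ j → g i ≠ g j) → (∀ i, i < d → F.IsRoot (g i)) →
    Pr d g ∣ F := by
  intro d
  induction d with
  | zero => intro F g _ _; simp [Pr]
  | succ d ih =>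
    intro F g hinj hroot
    obtain ⟨G, hG⟩ := dvd_iff_isRoot.mpr (hroot d d.lt_succ_self)
    have hGroot : ∀ i, i < d → G.IsRoot (g i) := by
      intro i hi
      have h0 := hroot i (hi.trans d.lt_succ_self)
      rw [hG] at h0
      simp only [IsRoot, eval_mul, eval_sub, eval_X, eval_C] at h0 ⊢
      rcases mul_eq_zero.mp h0 with h | h
      · exact absurd (by linarith [sub_eq_zero.mp h] : g i = g d)
          (hinj i d (hi.trans d.lt_succ_self) d.lt_succ_self hi.ne)
      · exact h
    have hdvd := ih G g (fun i j hi hj => hinj i j (hi.trans d.lt_succ_self)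
      (hj.trans d.lt_succ_self)) hGroot
    rw [Pr, Finset.prod_range_succ, hG, mul_comm (X - C (g d)) G, ← Pr]
    exact mul_dvd_mul hdvd dvd_rfl

lemma monic_eq_Pr {F : Polynomial ℝ} {d : ℕ} (hM : F.Monic) (hdeg : F.natDegree = d)
    (g : ℕ → ℝ) (hinj : ∀ i j, i < d → j < d → i ≠ j → g i ≠ g j)
    (hroot : ∀ i, i < d → F.IsRoot (g i)) : F = Pr d g := by
  obtain ⟨G, hG⟩ := prod_dvd_of_roots d F g hinj hroot
  have hG0 : G ≠ 0 := by
    rintro rfl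
    rw [mul_zero] at hG
    exact hM.ne_zero hG
  have hdegG : G.natDegree = 0 := by
    have := natDegree_mul (Pr_ne_zero d g) hG0
    rw [← hG, hdeg, Pr_natDegree] at this
    omega
  have hGc : G = C (G.coeff 0) := eq_C_of_natDegree_eq_zero hdegG
  have hlead : G.coeff 0 = 1 := by
    have h1 : F.leadingCoeff = 1 := hM
    rw [hG, hGc, leadingCoeff_mul, (Pr_monic d g).leadingCoeff, one_mul,
      leadingCoeff_C] at h1
    exact h1
  rw [hG, hGc, hlead, C_1, mul_one]

lemma root_between (F : Polynomial ℝ) {a b : ℝ} (hab : a < b)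
    (h : F.eval a * F.eval b < 0) : ∃ c, a < c ∧ c < b ∧ F.eval c = 0 := by
  rcases lt_or_gt_of_ne (fun h0 : F.eval a = 0 => by simp [h0] at h) with ha | ha
  · have hb : 0 < F.eval b := by nlinarith
    have := intermediate_value_Ioo hab.le (F.continuousOn (s := Set.Icc a b))
    have h0 : (0:ℝ) ∈ Set.Ioo (F.eval a) (F.eval b) := ⟨ha, hb⟩
    obtain ⟨c, hc, hc0⟩ := this h0
    exact ⟨c, hc.1, hc.2, hc0⟩
  · have hb : F.eval b < 0 := by nlinarith
    have := intermediate_value_Ioo' hab.le (F.continuousOn (s := Set.Icc a b))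
    have h0 : (0:ℝ) ∈ Set.Ioo (F.eval b) (F.eval a) := ⟨hb, ha⟩
    obtain ⟨c, hc, hc0⟩ := this h0
    exact ⟨c, hc.1, hc.2, hc0⟩

lemma mono_of_succ {n : ℕ} (f : ℕ → ℝ) (h : ∀ i, i < n → f i < f (i + 1)) :
    ∀ j i, i < j → j ≤ n → f i < f j := by
  intro j
  induction j with
  | zero => omega
  | succ j ih =>
    intro i hi hj
    have hstep : f j < f (j + 1) := h j (by omega)
    rcases Nat.lt_or_ge i j with hij | hij
    · exact (ih i hij (by omega)).trans hstep
    · have : i = j := by omega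
      subst this; exact hstep

/-- `μ` (k values) and `ν` (k+1 values) strictly interlace: ν₀<μ₀<ν₁<μ₁<⋯ -/
def Ilv (k : ℕ) (μ ν : ℕ → ℝ) : Prop := ∀ i, i < k → ν i < μ i ∧ μ i < ν (i + 1)

namespace Ilv

lemma nu_mono {k : ℕ} {μ ν : ℕ → ℝ} (h : Ilv k μ ν) :
    ∀ j i, i < j → j ≤ k → ν i < ν j :=
  mono_of_succ ν fun i hi => ((h i hi).1).trans (h i hi).2

lemma mu_lt_nu {k : ℕ} {μ ν : ℕ → ℝ} (h : Ilv k μ ν) :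
    ∀ i j, i < j → j ≤ k → i < k → μ i < ν j := by
  intro i j hij hj hik
  have h1 : μ i < ν (i + 1) := (h i hik).2
  rcases Nat.lt_or_ge (i+1) j with hlt | hge
  · exact h1.trans (h.nu_mono j (i+1) hlt hj)
  · have : j = i + 1 := by omega
    subst this; exact h1

lemma nu_lt_mu {k : ℕ} {μ ν : ℕ → ℝ} (h : Ilv k μ ν) :
    ∀ i j, i ≤ j → j < k → ν i < μ j := by
  intro i j hij hj
  have h2 : ν j < μ j := (h j hj).1
  rcases eq_or_lt_of_le hij with rfl | hlt
  · exact h2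
  · exact (h.nu_mono j i hlt (by omega)).trans h2

lemma mu_mono {k : ℕ} {μ ν : ℕ → ℝ} (h : Ilv k μ ν) :
    ∀ i j, i < j → j < k → μ i < μ j := by
  intro i j hij hj
  exact (h.mu_lt_nu i (i+1) (by omega) (by omega) (by omega)).trans_le
    ((h.nu_lt_mu (i+1) j (by omega) hj).le)

end Ilv

lemma sign_flip_mul {a b : ℝ} {e : ℕ} (h1 : 0 < (-1 : ℝ) ^ (e + 1) * a)
    (h2 : 0 < (-1 : ℝ) ^ e * b) : a * b < 0 := by
  rcases Nat.even_or_odd e with he | he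
  · rw [pow_succ, he.neg_one_pow] at h1
    rw [he.neg_one_pow] at h2
    nlinarith
  · rw [pow_succ, he.neg_one_pow] at h1
    rw [he.neg_one_pow] at h2
    nlinarith

lemma factor_of_alternating (F : Polynomial ℝ) (hM : F.Monic) {m : ℕ}
    (hdeg : F.natDegree = m + 1) (p : ℕ → ℝ) (hp : ∀ i j, i < j → j < m → p i < p j)
    (hsign : ∀ i, i < m → 0 < (-1 : ℝ) ^ (m - i) * F.eval (p i)) :
    ∃ κ : ℕ → ℝ, Ilv m p κ ∧ F = Pr (m + 1) κ := by
  classical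
  have hdegpos : 0 < F.degree := by
    rw [degree_eq_natDegree hM.ne_zero, hdeg]
    exact_mod_cast Nat.succ_pos m
  -- upper tail
  have htop : Tendsto (fun x => F.eval x) atTop atTop :=
    tendsto_atTop_of_leadingCoeff_nonneg F hdegpos (by rw [hM.leadingCoeff]; norm_num)
  set B : ℝ := if h : 0 < m then p (m - 1) else 0 with hB
  have hBge : ∀ i, i < m → p i ≤ B := by
    intro i hi
    rw [hB, dif_pos (by omega : 0 < m)]
    rcases Nat.lt_or_ge i (m-1) with h1 | h1
    · exact (hp i (m-1) h1 (by omega)).le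
    · have : i = m - 1 := by omega
      subst this; exact le_refl _
  obtain ⟨xp, hxp1, hxp2⟩ := ((htop.eventually_ge_atTop 1).and (eventually_gt_atTop B)).exists
  -- lower tail
  have hcomp : ∀ y : ℝ, (F.comp (-X)).eval y = F.eval (-y) := by
    intro y; simp [eval_comp]
  have hndc : (F.comp (-X)).natDegree = m + 1 := by
    rw [natDegree_comp]
    simp [hdeg, natDegree_neg, natDegree_X]
  set H : Polynomial ℝ := C ((-1 : ℝ) ^ (m + 1)) * F.comp (-X) with hH
  have hc1 : ((-1 : ℝ) ^ (m + 1)) ≠ 0 := by positivity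
  have hHdeg : H.natDegree = m + 1 := by rw [hH, natDegree_C_mul hc1, hndc]
  have hHlead : H.leadingCoeff = 1 := by
    have hlcx : (-X : Polynomial ℝ).leadingCoeff = -1 := by
      rw [leadingCoeff_neg, leadingCoeff_X]
    have hlc : (F.comp (-X)).leadingCoeff = (-1 : ℝ) ^ (m + 1) := by
      rw [leadingCoeff_comp (by simp : (-X : Polynomial ℝ).natDegree ≠ 0), hM.leadingCoeff,
        hdeg, one_mul, hlcx]
    rw [hH, leadingCoeff_mul, leadingCoeff_C, hlc, ← pow_add]
    exact Even.neg_one_pow ⟨m + 1, rfl⟩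
  have hH0 : H ≠ 0 := by
    intro h0; rw [h0] at hHdeg; simp at hHdeg
  have hbot : Tendsto (fun x => H.eval x) atTop atTop := by
    apply tendsto_atTop_of_leadingCoeff_nonneg
    · rw [degree_eq_natDegree hH0, hHdeg]; exact_mod_cast Nat.succ_pos m
    · rw [hHlead]; norm_num
  set B' : ℝ := if h : 0 < m then p 0 else xp with hB'
  have hB'le : ∀ i, i < m → B' ≤ p i := by
    intro i hi
    rw [hB', dif_pos (by omega : 0 < m)]
    rcases Nat.lt_or_ge 0 i with h1 | h1
    · exact (hp 0 i h1 hi).le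
    · have : i = 0 := by omega
      subst this; exact le_refl _
  obtain ⟨ym, hym1, hym2⟩ := ((hbot.eventually_ge_atTop 1).and
    (eventually_gt_atTop (max (-B') (-xp)))).exists
  set xm : ℝ := -ym with hxm
  have hxmB' : xm < B' := by
    have := lt_of_le_of_lt (le_max_left (-B') (-xp)) hym2
    rw [hxm]; linarith
  have hxmxp : xm < xp := by
    have := lt_of_le_of_lt (le_max_right (-B') (-xp)) hym2
    rw [hxm]; linarith
  have hFxm : 0 < (-1 : ℝ) ^ (m + 1) * F.eval xm := by
    have : H.eval ym = (-1 : ℝ) ^ (m + 1) * F.eval (-ym) := by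
      rw [hH, eval_mul, eval_C, hcomp]
    rw [hxm, ← this]; linarith
  -- the grid of points
  set pts : ℕ → ℝ := fun i => if i = 0 then xm else if i ≤ m then p (i - 1) else xp with hpts
  have hpts0 : pts 0 = xm := by simp [hpts]
  have hptsi : ∀ i, 1 ≤ i → i ≤ m → pts i = p (i - 1) := by
    intro i h1 h2
    simp only [hpts]
    rw [if_neg (by omega : ¬ i = 0), if_pos h2]
  have hptse : pts (m + 1) = xp := by
    simp only [hpts]
    rw [if_neg (by omega), if_neg (by omega)]
  have hptslt : ∀ i, i ≤ m → pts i < pts (i + 1) := by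
    intro i hi
    by_cases h0 : i = 0
    · subst h0
      rcases Nat.eq_zero_or_pos m with hm | hm
      · have h1 : pts 1 = xp := by
          subst hm; exact hptse
        rw [hpts0, h1]; exact hxmxp
      · rw [hpts0, hptsi 1 (le_refl 1) (by omega)]
        exact lt_of_lt_of_le hxmB' (hB'le 0 hm)
    · rcases Nat.lt_or_ge (i + 1) (m + 1) with h1 | h1
      · rw [hptsi i (by omega) hi, hptsi (i + 1) (by omega) (by omega)]
        have he : (i + 1) - 1 = i := by omega
        rw [he]
        exact hp (i - 1) i (by omega) (by omega)
      · have him : i = m := by omega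
        subst him
        rw [hptsi i (by omega) (le_refl i), hptse]
        exact lt_of_le_of_lt (hBge (i - 1) (by omega)) hxp2
  have hptsmono : ∀ j i, i < j → j ≤ m + 1 → pts i < pts j :=
    mono_of_succ pts fun i hi => hptslt i (by omega)
  have hsg : ∀ i, i ≤ m + 1 → 0 < (-1 : ℝ) ^ (m + 1 - i) * F.eval (pts i) := by
    intro i hi
    by_cases h0 : i = 0
    · subst h0; rw [hpts0]; simpa using hFxm
    · rcases Nat.lt_or_ge i (m + 1) with h1 | h1
      · rw [hptsi i (by omega) (by omega)]
        have h2 := hsign (i - 1) (by omega)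
        have he : m - (i - 1) = m + 1 - i := by omega
        rw [he] at h2; exact h2
      · have : i = m + 1 := by omega
        subst this
        simp only [Nat.add_sub_cancel, Nat.sub_self, pow_zero, one_mul, hptse]
        linarith
  have hroots : ∀ i, i ≤ m → ∃ c, pts i < c ∧ c < pts (i + 1) ∧ F.eval c = 0 := by
    intro i hi
    apply root_between F (hptslt i hi)
    have e1 : 0 < (-1 : ℝ) ^ (m + 1 - i) * F.eval (pts i) := hsg i (by omega)
    have e2 : 0 < (-1 : ℝ) ^ (m + 1 - (i + 1)) * F.eval (pts (i + 1)) := hsg (i + 1) (by omega)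
    have hee : m + 1 - i = (m - i) + 1 := by omega
    have hee2 : m + 1 - (i + 1) = m - i := by omega
    rw [hee] at e1; rw [hee2] at e2
    exact sign_flip_mul e1 e2
  have Hex : ∀ i, ∃ c, i ≤ m → (pts i < c ∧ c < pts (i + 1) ∧ F.eval c = 0) := by
    intro i
    by_cases h : i ≤ m
    · obtain ⟨c, hc⟩ := hroots i h; exact ⟨c, fun _ => hc⟩
    · exact ⟨0, fun h' => absurd h' h⟩
  choose κ hκ using Hex
  have hκmono : ∀ i j, i < j → j ≤ m → κ i < κ j := by
    intro i j hij hj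
    have h1 : κ i < pts (i + 1) := (hκ i (by omega)).2.1
    have h2 : pts j < κ j := (hκ j hj).1
    rcases Nat.eq_or_lt_of_le (by omega : i + 1 ≤ j) with he | hlt
    · rw [he] at h1; linarith
    · have := hptsmono j (i + 1) hlt (by omega)
      linarith
  have hIlv : Ilv m p κ := by
    intro i hi
    have hpe : pts (i + 1) = p i := by
      have he : (i + 1) - 1 = i := by omega
      rw [hptsi (i + 1) (by omega) (by omega), he]
    constructor
    · rw [← hpe]; exact (hκ i (by omega)).2.1
    · rw [← hpe]; exact (hκ (i + 1) (by omega)).1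
  refine ⟨κ, hIlv, monic_eq_Pr hM hdeg κ ?_ ?_⟩
  · intro i j hi hj hne
    rcases Nat.lt_or_ge i j with hlt | hge
    · exact ne_of_lt (hκmono i j hlt (by omega))
    · exact (ne_of_lt (hκmono j i (by omega) (by omega))).symm
  · intro i hi
    exact (hκ i (by omega)).2.2

lemma ilv_step {k : ℕ} {a b : ℝ} (hb : 0 < b) {μ ν : ℕ → ℝ} (h : Ilv k μ ν) :
    ∃ κ, Ilv (k + 1) ν κ ∧
      (X - C a) * Pr (k + 1) ν - C b * Pr k μ = Pr (k + 2) κ := by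
  set F := (X - C a) * Pr (k + 1) ν - C b * Pr k μ with hF
  have hA : ((X - C a) * Pr (k + 1) ν).Monic := (monic_X_sub_C a).mul (Pr_monic _ _)
  have hAdeg : ((X - C a) * Pr (k + 1) ν).degree = ((k + 2 : ℕ) : WithBot ℕ) := by
    rw [degree_mul, degree_X_sub_C, Pr_degree]
    exact_mod_cast congrArg (Nat.cast : ℕ → WithBot ℕ) (by omega : 1 + (k + 1) = k + 2)
  have hBdeg : (C b * Pr k μ).degree < ((X - C a) * Pr (k + 1) ν).degree := by
    rw [hAdeg]
    apply lt_of_le_of_lt (degree_mul_le _ _)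
    apply lt_of_le_of_lt (add_le_add degree_C_le le_rfl)
    rw [zero_add, Pr_degree]
    exact_mod_cast (by omega : k < k + 2)
  have hM : F.Monic := by
    rw [hF, sub_eq_add_neg]
    exact hA.add_of_left (by rw [degree_neg]; exact hBdeg)
  have hFdeg : F.natDegree = k + 2 := by
    apply natDegree_eq_of_degree_eq_some
    rw [hF, sub_eq_add_neg,
      degree_add_eq_left_of_degree_lt (by rw [degree_neg]; exact hBdeg), hAdeg]
  have hsg : ∀ i, i < k + 1 → 0 < (-1 : ℝ) ^ (k + 1 - i) * F.eval (ν i) := by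
    intro i hi
    have hν0 : (Pr (k + 1) ν).eval (ν i) = 0 := by
      rw [Pr_eval]
      exact Finset.prod_eq_zero (Finset.mem_range.mpr hi) (by simp)
    have hev : F.eval (ν i) = -(b * (Pr k μ).eval (ν i)) := by
      rw [hF]; simp [hν0]
    have hPμ : 0 < (-1 : ℝ) ^ (k - i) * ∏ j ∈ Finset.range k, (ν i - μ j) := by
      apply eval_sign (by omega : i ≤ k)
      · intro l hl
        exact h.mu_lt_nu l i hl (by omega) (by omega)
      · intro l hl1 hl2
        exact h.nu_lt_mu i l hl1 hl2
    have hexp : k + 1 - i = (k - i) + 1 := by omega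
    rw [hexp, hev, pow_succ]
    have hr : (-1 : ℝ) ^ (k - i) * -1 * -(b * (Pr k μ).eval (ν i))
        = b * ((-1 : ℝ) ^ (k - i) * (Pr k μ).eval (ν i)) := by ring
    rw [hr, Pr_eval]
    exact mul_pos hb hPμ
  obtain ⟨κ, h1, h2⟩ := factor_of_alternating F hM (m := k + 1) hFdeg ν
    (fun i j hij hj => h.nu_mono j i hij (by omega)) hsg
  exact ⟨κ, h1, h2⟩

lemma pencil {k : ℕ} {μ ν : ℕ → ℝ} (h : Ilv k μ ν) (t : ℝ) :
    ∃ L, Ilv k μ L ∧ Pr (k + 1) ν - C t * Pr k μ = Pr (k + 1) L := by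
  set F := Pr (k + 1) ν - C t * Pr k μ with hF
  have hBdeg : (C t * Pr k μ).degree < (Pr (k + 1) ν).degree := by
    rw [Pr_degree (k+1)]
    apply lt_of_le_of_lt (degree_mul_le _ _)
    apply lt_of_le_of_lt (add_le_add degree_C_le le_rfl)
    rw [zero_add, Pr_degree]
    exact_mod_cast (by omega : k < k + 1)
  have hM : F.Monic := by
    rw [hF, sub_eq_add_neg]
    exact (Pr_monic (k + 1) ν).add_of_left (by rw [degree_neg]; exact hBdeg)
  have hFdeg : F.natDegree = k + 1 := by
    apply natDegree_eq_of_degree_eq_some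
    rw [hF, sub_eq_add_neg,
      degree_add_eq_left_of_degree_lt (by rw [degree_neg]; exact hBdeg), Pr_degree]
  have hsg : ∀ i, i < k → 0 < (-1 : ℝ) ^ (k - i) * F.eval (μ i) := by
    intro i hi
    have hμ0 : (Pr k μ).eval (μ i) = 0 := by
      rw [Pr_eval]
      exact Finset.prod_eq_zero (Finset.mem_range.mpr hi) (by simp)
    have hev : F.eval (μ i) = (Pr (k + 1) ν).eval (μ i) := by
      rw [hF]; simp [hμ0]
    have hPν : 0 < (-1 : ℝ) ^ ((k + 1) - (i + 1)) * ∏ j ∈ Finset.range (k + 1), (μ i - ν j) := by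
      apply eval_sign (by omega : i + 1 ≤ k + 1)
      · intro l hl
        exact h.nu_lt_mu l i (by omega) hi
      · intro l hl1 hl2
        exact h.mu_lt_nu i l (by omega) (by omega) hi
    have hexp : (k + 1) - (i + 1) = k - i := by omega
    rw [hexp] at hPν
    rw [hev, Pr_eval]
    exact hPν
  obtain ⟨L, h1, h2⟩ := factor_of_alternating F hM (m := k) hFdeg μ
    (fun i j hij hj => h.mu_mono i j hij hj) hsg
  exact ⟨L, h1, h2⟩

/-- sign of `Pr (k+1) L` at a point in the `n`-th slot of the `μ`-grid locates `L n`. -/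
lemma slot_sign {k : ℕ} {μ L : ℕ → ℝ} (h : Ilv k μ L) {n : ℕ} {x : ℝ} (hn : n ≤ k)
    (h1 : ∀ j, j < n → μ j < x) (h2 : ∀ j, n ≤ j → j < k → x < μ j) :
    (0 < (-1 : ℝ) ^ (k - n) * (Pr (k + 1) L).eval x → L n < x) ∧
    (0 < (-1 : ℝ) ^ (k - n + 1) * (Pr (k + 1) L).eval x → x < L n) := by
  have hlow : ∀ i, i < n → L i < x := by
    intro i hi
    exact lt_trans (h i (by omega)).1 (h1 i hi)
  have hhigh : ∀ i, n + 1 ≤ i → i < k + 1 → x < L i := by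
    intro i hi1 hi2
    have hx : x < μ (i - 1) := h2 (i - 1) (by omega) (by omega)
    have hμL : μ (i - 1) < L i := by
      have h3 := (h (i - 1) (by omega)).2
      have he : i - 1 + 1 = i := by omega
      rw [he] at h3
      exact h3
    linarith
  have hsplit : (Pr (k + 1) L).eval x
      = (x - L n) * ((∏ i ∈ Finset.range n, (x - L i)) *
        ∏ i ∈ Finset.Ico (n + 1) (k + 1), (x - L i)) := by
    rw [Pr_eval, ← Finset.prod_range_mul_prod_Ico _ (by omega : n + 1 ≤ k + 1),
      Finset.prod_range_succ]
    ring
  have hP1 : 0 < ∏ i ∈ Finset.range n, (x - L i) :=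
    Finset.prod_pos fun i hi => sub_pos.mpr (hlow i (Finset.mem_range.mp hi))
  have hP2 : 0 < (-1 : ℝ) ^ (k - n) * ∏ i ∈ Finset.Ico (n + 1) (k + 1), (x - L i) := by
    have h4 := prod_neg_sign (g := fun i => x - L i) (Finset.Ico (n + 1) (k + 1))
      (fun i hi => by
        obtain ⟨hi1, hi2⟩ := Finset.mem_Ico.mp hi
        exact sub_neg.mpr (hhigh i hi1 hi2))
    rwa [Nat.card_Ico, show k + 1 - (n + 1) = k - n by omega] at h4
  constructor
  · intro hs
    rw [hsplit] at hs
    nlinarith [mul_pos hP1 hP2]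
  · intro hs
    rw [hsplit, pow_succ] at hs
    nlinarith [mul_pos hP1 hP2]

variable (N : ℕ) (f q w : ℕ → ℝ) (β : ℝ)

/-- the downward solution chain: `zch (k+1)` is `z_{N-k}` where `z` satisfies the
equation and the `β` boundary condition at `N`. -/
noncomputable def zch : ℕ → Polynomial ℝ
  | 0 => C (Real.sin β + Real.cos β / f N)
  | 1 => C (Real.sin β)
  | k + 2 =>
      C (f (N - k - 1))⁻¹ *
        ((C (f (N - k - 1) + f (N - k) + q (N - k)) - X * C (w (N - k))) *
            zch (k + 1) -
          C (f (N - k)) * zch k)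

/-- leading-type normalizing constants -/
noncomputable def cc : ℕ → ℝ
  | 0 => 1
  | 1 => Real.sin β
  | k + 2 => -(w (N - k) / f (N - k - 1)) * cc (k + 1)

lemma zch_rec (k : ℕ) (hfn : f (N - k - 1) ≠ 0) :
    C (f (N - k - 1)) * zch N f q w β (k + 2) =
      (C (f (N - k - 1) + f (N - k) + q (N - k)) - X * C (w (N - k))) * zch N f q w β (k + 1) -
        C (f (N - k)) * zch N f q w β k := by
  rw [zch, ← mul_assoc, ← C_mul, mul_inv_cancel₀ hfn, C_1, one_mul]

lemma cc_ne (hβ : Real.sin β ≠ 0) (hf : ∀ n ≤ N, f n ≠ 0)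
    (hw : ∀ n, 1 ≤ n → n ≤ N → 0 < w n) :
    ∀ k, k ≤ N → cc N f w β (k + 1) ≠ 0 := by
  intro k
  induction k with
  | zero => intro _; simpa [cc] using hβ
  | succ k ih =>
    intro hk
    show -(w (N - k) / f (N - k - 1)) * cc N f w β (k + 1) ≠ 0
    apply mul_ne_zero
    · have hw1 : 0 < w (N - k) := hw (N - k) (by omega) (by omega)
      have hf1 : f (N - k - 1) ≠ 0 := hf (N - k - 1) (by omega)
      simp only [neg_ne_zero]
      exact div_ne_zero (ne_of_gt hw1) hf1
    · exact ih (by omega)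

section Wron
variable (y0 d0 : ℂ)

/-- Wronskian-type invariant of the upward solution `slSol` against the mapped
downward chain. -/
noncomputable def Wr (k : ℕ) : Polynomial ℂ :=
  C ((f (N - k) : ℂ)) *
    (slSol f q w y0 d0 (N - k + 1) * (zch N f q w β (k + 1)).map (algebraMap ℝ ℂ) -
     slSol f q w y0 d0 (N - k) * (zch N f q w β k).map (algebraMap ℝ ℂ))

lemma wron (hf : ∀ n ≤ N, f n ≠ 0) : ∀ k, k ≤ N → Wr N f q w β y0 d0 k = Wr N f q w β y0 d0 0 := by
  intro k
  induction k with
  | zero => intro _; rfl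
  | succ k ih =>
    intro hk
    rw [← ih (by omega)]
    set n := N - k - 1 with hn
    have h1 : N - (k + 1) = n := by omega
    have h2 : N - k = n + 1 := by omega
    have h3 : N - k + 1 = n + 2 := by omega
    set y : ℕ → Polynomial ℂ := slSol f q w y0 d0 with hy
    set Z : ℕ → Polynomial ℝ := zch N f q w β with hZ
    have hfn : f n ≠ 0 := hf n (by omega)
    have hfn1 : f (n + 1) ≠ 0 := hf (n + 1) (by omega)
    have hfnc : ((f (n + 1) : ℝ) : ℂ) ≠ 0 := by exact_mod_cast hfn1
    -- upward recurrence, cleared of inverses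
    have e1 : C ((f (n + 1) : ℂ)) * y (n + 2) =
        C ((f (n + 1) : ℂ)) * y (n + 1) +
          (C ((f n : ℂ)) * (y (n + 1) - y n) + C ((q (n + 1) : ℂ)) * y (n + 1)
            - X * C ((w (n + 1) : ℂ)) * y (n + 1)) := by
      rw [hy]
      show C ((f (n + 1) : ℂ)) * slSol f q w y0 d0 (n + 2) = _
      rw [slSol]
      rw [mul_add, ← mul_assoc, ← C_mul, mul_inv_cancel₀ hfnc, C_1, one_mul]
    -- downward recurrence over ℝ, mapped to ℂ
    have e2r := zch_rec N f q w β k hfn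
    rw [← hn] at e2r
    have h4 : N - k = n + 1 := h2
    rw [h4] at e2r
    have e2 : C ((f n : ℂ)) * (Z (k + 2)).map (algebraMap ℝ ℂ) =
        (C ((f n : ℂ)) + C ((f (n + 1) : ℂ)) + C ((q (n + 1) : ℂ))
          - X * C ((w (n + 1) : ℂ))) * (Z (k + 1)).map (algebraMap ℝ ℂ) -
          C ((f (n + 1) : ℂ)) * (Z k).map (algebraMap ℝ ℂ) := by
      have := congrArg (Polynomial.map (algebraMap ℝ ℂ)) e2r
      simpa [Polynomial.map_mul, Polynomial.map_sub, Polynomial.map_add,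
        Polynomial.map_C, Polynomial.map_X, Complex.ofReal_add, C_add] using this
    show C ((f (N - (k+1)) : ℂ)) *
        (y (N - (k+1) + 1) * (Z (k + 2)).map (algebraMap ℝ ℂ) -
         y (N - (k+1)) * (Z (k + 1)).map (algebraMap ℝ ℂ))
      = C ((f (N - k) : ℂ)) *
        (y (N - k + 1) * (Z (k + 1)).map (algebraMap ℝ ℂ) -
         y (N - k) * (Z k).map (algebraMap ℝ ℂ))
    rw [h1, h2]
    rw [show n + 1 + 1 = n + 2 from rfl]
    linear_combination y (n + 1) * e2 - (Z (k + 1)).map (algebraMap ℝ ℂ) * e1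

end Wron

lemma chain (hN : 2 ≤ N) (hf : ∀ n ≤ N, f n ≠ 0) (hw : ∀ n, 1 ≤ n → n ≤ N → 0 < w n)
    (hβ : Real.sin β ≠ 0) :
    ∀ k, k ≤ N - 1 → ∃ μ ν : ℕ → ℝ, Ilv k μ ν ∧
      zch N f q w β (k + 1) = C (cc N f w β (k + 1)) * Pr k μ ∧
      zch N f q w β (k + 2) = C (cc N f w β (k + 2)) * Pr (k + 1) ν := by
  intro k
  induction k with
  | zero =>
    intro _
    have hfN1 : f (N - 1) ≠ 0 := hf (N - 1) (by omega)
    have hfN : f N ≠ 0 := hf N le_rfl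
    have hwN : 0 < w N := hw N (by omega) le_rfl
    refine ⟨fun _ => 0,
      fun _ => ((f (N - 1) + f N + q N) * Real.sin β - f N * (Real.sin β + Real.cos β / f N)) /
        (w N * Real.sin β), ?_, ?_, ?_⟩
    · intro i hi; omega
    · show zch N f q w β 1 = C (cc N f w β 1) * Pr 0 (fun _ => 0)
      simp [zch, cc, Pr]
    · set ν0 : ℝ := ((f (N - 1) + f N + q N) * Real.sin β - f N * (Real.sin β + Real.cos β / f N)) /
        (w N * Real.sin β) with hν0
      apply mul_left_cancel₀ ((Polynomial.C_ne_zero (R := ℝ)).mpr hfN1)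
      have hz2 := zch_rec N f q w β 0 (by
        have he : N - 0 - 1 = N - 1 := by omega
        rw [he]; exact hfN1)
      simp only [Nat.sub_zero] at hz2
      rw [hz2]
      have hz1 : zch N f q w β 1 = C (Real.sin β) := rfl
      have hz0 : zch N f q w β 0 = C (Real.sin β + Real.cos β / f N) := rfl
      rw [hz1, hz0]
      have hPr1 : Pr 1 (fun _ => ν0) = X - C ν0 := by simp [Pr]
      rw [hPr1]
      have hwN' : w N ≠ 0 := ne_of_gt hwN
      have hcc2 : cc N f w β 2 = -(w N / f (N - 1)) * Real.sin β := by
        show cc N f w β (0 + 2) = _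
        rw [cc]
        simp [cc]
      have h1 : f (N - 1) * cc N f w β 2 = -(w N * Real.sin β) := by
        rw [hcc2]; field_simp
      have hA : C (f (N - 1)) * C (cc N f w β 2) = -(C (w N) * C (Real.sin β)) := by
        rw [← C_mul, ← C_mul, ← C_neg]
        exact congrArg C h1
      have hB : C (f (N - 1)) * C (cc N f w β 2) * C ν0 =
          C (f N) * C (Real.sin β + Real.cos β / f N) -
            C (f (N - 1) + f N + q N) * C (Real.sin β) := by
        rw [← C_mul, ← C_mul, ← C_mul, ← C_mul, ← C_sub]
        congr 1
        rw [h1, hν0]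
        field_simp
        ring
      linear_combination (-X) * hA + hB
  | succ k ih =>
    intro hk
    obtain ⟨μ, ν, hIlv, hz1, hz2⟩ := ih (by omega)
    have hf' : f (N - k - 2) ≠ 0 := hf (N - k - 2) (by omega)
    have hg : f (N - k - 1) ≠ 0 := hf (N - k - 1) (by omega)
    have hw' : 0 < w (N - k - 1) := hw (N - k - 1) (by omega) (by omega)
    have hw'' : 0 < w (N - k) := hw (N - k) (by omega) (by omega)
    set a : ℝ := (f (N - k - 2) + f (N - k - 1) + q (N - k - 1)) / w (N - k - 1) with ha
    set b : ℝ := f (N - k - 1) ^ 2 / (w (N - k - 1) * w (N - k)) with hb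
    have hbpos : 0 < b := by
      rw [hb]
      have hg2 : 0 < f (N - k - 1) ^ 2 :=
        lt_of_le_of_ne (sq_nonneg _) (Ne.symm (pow_ne_zero 2 hg))
      exact div_pos hg2 (mul_pos hw' hw'')
    obtain ⟨κ, hIlv', hPreq⟩ := ilv_step (a := a) (b := b) hbpos hIlv
    refine ⟨ν, κ, hIlv', hz2, ?_⟩
    apply mul_left_cancel₀ ((Polynomial.C_ne_zero (R := ℝ)).mpr hf')
    have hrec := zch_rec N f q w β (k + 1) (by
      have : N - (k + 1) - 1 = N - k - 2 := by omega
      rw [this]; exact hf')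
    have i1 : N - (k + 1) - 1 = N - k - 2 := by omega
    have i2 : N - (k + 1) = N - k - 1 := by omega
    rw [i1, i2] at hrec
    rw [show k + 1 + 2 = k + 3 from rfl] at hrec
    rw [show k + 1 + 1 = k + 2 from rfl] at hrec
    rw [show (k + 1) + 2 = k + 3 from rfl]
    rw [hrec, hz1, hz2, ← hPreq]
    have hcc3 : cc N f w β (k + 3) = -(w (N - k - 1) / f (N - k - 2)) * cc N f w β (k + 2) := by
      show cc N f w β ((k + 1) + 2) = _
      rw [cc]
      congr 2 <;> omega
    have hcc2 : cc N f w β (k + 2) = -(w (N - k) / f (N - k - 1)) * cc N f w β (k + 1) := by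
      rw [cc]
    have hA : C (f (N - k - 2)) * C (cc N f w β (k + 3)) =
        -(C (w (N - k - 1)) * C (cc N f w β (k + 2))) := by
      rw [← C_mul, ← C_mul, ← C_neg]
      congr 1
      rw [hcc3]
      field_simp
    have hwne : w (N - k - 1) ≠ 0 := ne_of_gt hw'
    have hwne2 : w (N - k) ≠ 0 := ne_of_gt hw''
    have hB : C (f (N - k - 2) + f (N - k - 1) + q (N - k - 1)) * C (cc N f w β (k + 2)) =
        -(C (f (N - k - 2)) * C (cc N f w β (k + 3)) * C a) := by
      rw [← C_mul, ← C_mul, ← C_mul, ← C_neg]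
      congr 1
      rw [hcc3, ha]
      field_simp
    have hC : C (f (N - k - 1)) * C (cc N f w β (k + 1)) =
        C (f (N - k - 2)) * C (cc N f w β (k + 3)) * C b := by
      rw [← C_mul, ← C_mul, ← C_mul]
      congr 1
      rw [hcc3, hcc2, hb]
      field_simp
    linear_combination Pr (k + 1) ν * hB - X * Pr (k + 1) ν * hA - Pr k μ * hC

lemma gammaEq (N : ℕ) (f q w : ℕ → ℝ) (β : ℝ) (hN : 1 ≤ N)
    (hfall : ∀ n ≤ N, f n ≠ 0) (α : ℝ) :
    slCharPoly N f q w (sepA α) (sepB β) =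
      (C (-(Real.cos α + f 0 * Real.sin α)) * zch N f q w β (N + 1)
        + C (f 0 * Real.sin α) * zch N f q w β N).map (algebraMap ℝ ℂ) := by
  have hf0 : f 0 ≠ 0 := hfall 0 (by omega)
  have hfN : f N ≠ 0 := hfall N le_rfl
  have hf0c : ((f 0 : ℝ) : ℂ) ≠ 0 := by exact_mod_cast hf0
  have hφ0 : slSol f q w 1 0 0 = C 1 := rfl
  have hφ1 : slSol f q w 1 0 1 = C 1 := by
    show C (1 + 0 / ((f 0 : ℝ) : ℂ)) = C 1
    norm_num
  have hψ0 : slSol f q w 0 1 0 = 0 := by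
    show C 0 = 0
    simp
  have hψ1 : slSol f q w 0 1 1 = C (((f 0 : ℝ) : ℂ))⁻¹ := by
    show C (0 + 1 / ((f 0 : ℝ) : ℂ)) = _
    simp [one_div]
  have hZm1 : (zch N f q w β 1).map (algebraMap ℝ ℂ) = C (Complex.sin ↑β) := by
    show (C (Real.sin β)).map (algebraMap ℝ ℂ) = _
    simp [Complex.ofReal_sin]
  have hZm0 : (zch N f q w β 0).map (algebraMap ℝ ℂ)
      = C (Complex.sin ↑β) + C ((Real.cos β / f N : ℝ) : ℂ) := by
    show (C (Real.sin β + Real.cos β / f N)).map (algebraMap ℝ ℂ) = _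
    simp only [Polynomial.map_add, Polynomial.map_C, Complex.coe_algebraMap,
      Complex.ofReal_add, C_add, Complex.ofReal_sin]
  have hu : C ((f N : ℝ) : ℂ) * C ((Real.cos β / f N : ℝ) : ℂ) = C (Complex.cos ↑β) := by
    rw [← C_mul, ← Complex.ofReal_mul, ← Complex.ofReal_cos]
    congr 1
    congr 1
    field_simp
  have hinv : C ((f 0 : ℝ) : ℂ) * C (((f 0 : ℝ) : ℂ))⁻¹ = 1 := by
    rw [← C_mul, mul_inv_cancel₀ hf0c, C_1]
  have hWφ := wron N f q w β 1 0 hfall N le_rfl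
  have hWψ := wron N f q w β 0 1 hfall N le_rfl
  rw [Wr, Wr] at hWφ hWψ
  simp only [Nat.sub_self, Nat.sub_zero, zero_add] at hWφ hWψ
  rw [hφ0, hφ1, hZm1, hZm0] at hWφ
  rw [hψ0, hψ1, hZm1, hZm0] at hWψ
  simp only [C_1, one_mul, mul_one, zero_mul, mul_zero, sub_zero, zero_sub] at hWφ hWψ
  have hφclean : C (Complex.cos ↑β) * slSol f q w 1 0 N
      - C (Complex.sin ↑β) * C ((f N : ℝ) : ℂ) * (slSol f q w 1 0 (N + 1) - slSol f q w 1 0 N)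
      = C ((f 0 : ℝ) : ℂ) * (zch N f q w β N).map (algebraMap ℝ ℂ)
        - C ((f 0 : ℝ) : ℂ) * (zch N f q w β (N + 1)).map (algebraMap ℝ ℂ) := by
    linear_combination hWφ - slSol f q w 1 0 N * hu
  have hψclean : C (Complex.cos ↑β) * slSol f q w 0 1 N
      - C (Complex.sin ↑β) * C ((f N : ℝ) : ℂ) * (slSol f q w 0 1 (N + 1) - slSol f q w 0 1 N)
      = - (zch N f q w β (N + 1)).map (algebraMap ℝ ℂ) := by
    linear_combination hWψ - slSol f q w 0 1 N * hu
      - (zch N f q w β (N + 1)).map (algebraMap ℝ ℂ) * hinv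
  rw [slCharPoly]
  simp only [sepA, sepB, Matrix.det_fin_two_of, Matrix.cons_val', Matrix.cons_val_zero,
    Matrix.cons_val_one, Matrix.head_cons, Matrix.empty_val', Matrix.cons_val_fin_one,
    Matrix.head_fin_const]
  simp only [Polynomial.map_add, Polynomial.map_mul, Polynomial.map_C, Complex.coe_algebraMap,
    Complex.ofReal_neg, Complex.ofReal_add, Complex.ofReal_mul, Complex.ofReal_cos,
    Complex.ofReal_sin, C_neg, C_add, C_mul]
  norm_num
  linear_combination C (Complex.sin ↑α) * hφclean + C (Complex.cos ↑α) * hψclean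

lemma roots_prod_lin (m : ℕ) (gc : ℕ → ℂ) :
    (∏ i ∈ Finset.range m, (X - C (gc i))).roots = (Multiset.range m).map gc := by
  induction m with
  | zero => simp
  | succ m ih =>
    rw [Finset.prod_range_succ, Polynomial.roots_mul, ih, roots_X_sub_C, Multiset.range_succ]
    · rw [Multiset.map_cons, add_comm, Multiset.singleton_add]
    · apply mul_ne_zero
      · exact (monic_prod_of_monic _ _ fun i _ => monic_X_sub_C (gc i)).ne_zero
      · exact X_sub_C_ne_zero (gc m)

lemma nthEig_eq (m : ℕ) (L : ℕ → ℝ) (hL : ∀ i j, i < j → j < m → L i < L j)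
    (e : ℂ) (he : e ≠ 0) (Γ : Polynomial ℂ)
    (hΓ : Γ = C e * (Pr m L).map (algebraMap ℝ ℂ)) (n : ℕ) (hn : n < m) :
    nthEig Γ n = L n := by
  have hPm : (Pr m L).map (algebraMap ℝ ℂ) = ∏ i ∈ Finset.range m, (X - C ((L i : ℝ) : ℂ)) := by
    simp [Pr, Polynomial.map_prod, Polynomial.map_sub, Polynomial.map_C, Polynomial.map_X,
      Complex.coe_algebraMap]
  have hroots : Γ.roots = (Multiset.range m).map (fun i => ((L i : ℝ) : ℂ)) := by
    rw [hΓ, hPm, Polynomial.roots_C_mul _ he, roots_prod_lin]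
  have hfilter : Γ.roots.filter (fun z => z.im = 0) = Γ.roots := by
    apply Multiset.filter_eq_self.mpr
    intro a ha
    rw [hroots] at ha
    obtain ⟨i, _, rfl⟩ := Multiset.mem_map.mp ha
    simp
  have hre : (Γ.roots.filter (fun z => z.im = 0)).map Complex.re
      = ((List.range m).map L : List ℝ) := by
    rw [hfilter, hroots]
    rw [show (Multiset.range m) = ((List.range m : List ℕ) : Multiset ℕ) from rfl]
    simp [Multiset.map_map, Function.comp_def, Complex.ofReal_re]
  have hsorted : List.Pairwise (· ≤ ·) ((List.range m).map L) := by
    rw [List.pairwise_iff_getElem]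
    intro i j hi hj hij
    simp only [List.length_map, List.length_range] at hi hj
    simp only [List.getElem_map, List.getElem_range]
    exact (hL i j hij hj).le
  have heig : eigList Γ = (List.range m).map L := by
    rw [eigList, hre]
    refine List.Perm.eq_of_pairwise' (r := (· ≤ ·)) (Multiset.pairwise_sort _ _) hsorted ?_
    apply Multiset.coe_eq_coe.mp
    rw [Multiset.sort_eq]
  rw [nthEig, heig]
  rw [List.getD_eq_getElem _ _ (by simpa using hn)]
  simp


end SLaux

/-- For fixed equation data and fixed `β₀ ∈ (0,π)`, each `n`-th eigenvalue function
`α ↦ λₙ(S_{α,β₀})` is strictly decreasing on `[0,ξ)` and on `(ξ,π)`, where `ξ` is the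
unique angle in `(0,π)` with `cos ξ + f₀ sin ξ = 0`, and satisfies
`lim_{α→π⁻} λₙ(α) = λₙ(0)` for all `0 ≤ n ≤ N-1`. -/


theorem separated_nthEig_monotone (N : ℕ) (hN : 2 ≤ N) (f q w : ℕ → ℝ)
    (hf : ∀ n ≤ N, f n ≠ 0) (hw : ∀ n, 1 ≤ n → n ≤ N → 0 < w n)
    (β0 : ℝ) (hβ0 : β0 ∈ Set.Ioo 0 Real.pi)
    (ξ : ℝ) (hξ : ξ ∈ Set.Ioo 0 Real.pi)
    (hξeq : Real.cos ξ + f 0 * Real.sin ξ = 0)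
    (n : ℕ) (hn : n < N) :
    StrictAntiOn (fun α => nthEig (slCharPoly N f q w (sepA α) (sepB β0)) n)
      (Set.Ico 0 ξ) ∧
    StrictAntiOn (fun α => nthEig (slCharPoly N f q w (sepA α) (sepB β0)) n)
      (Set.Ioo ξ Real.pi) ∧
    Tendsto (fun α => nthEig (slCharPoly N f q w (sepA α) (sepB β0)) n)
      (nhdsWithin Real.pi (Set.Iio Real.pi))
      (nhds (nthEig (slCharPoly N f q w (sepA 0) (sepB β0)) n)) := by
  obtain ⟨hβl, hβu⟩ := hβ0
  obtain ⟨hξl, hξu⟩ := hξ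
  have hsβ : 0 < Real.sin β0 := Real.sin_pos_of_pos_of_lt_pi hβl hβu
  have hsξ : 0 < Real.sin ξ := Real.sin_pos_of_pos_of_lt_pi hξl hξu
  have hf0 : f 0 ≠ 0 := hf 0 (by omega)
  have hw1 : 0 < w 1 := hw 1 le_rfl (by omega)
  have hw1' : w 1 ≠ 0 := ne_of_gt hw1
  have hf0sq : 0 < f 0 ^ 2 := lt_of_le_of_ne (sq_nonneg _) (Ne.symm (pow_ne_zero 2 hf0))
  set Dv : ℝ → ℝ := fun α => Real.cos α + f 0 * Real.sin α with hDv
  have hDval : ∀ α, Dv α = Real.sin (ξ - α) / Real.sin ξ := by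
    intro α
    rw [hDv]
    simp only
    rw [Real.sin_sub]
    have hfξ : f 0 = -Real.cos ξ / Real.sin ξ := by
      field_simp
      linarith [hξeq]
    rw [hfξ]
    field_simp
    ring
  set τv : ℝ → ℝ := fun α => -(f 0) ^ 2 * Real.sin α / (w 1 * Dv α) with hτv
  obtain ⟨μ, ν, hIlv, hzN, hzN1⟩ :=
    SLaux.chain N f q w β0 hN hf hw (ne_of_gt hsβ) (N - 1) le_rfl
  have e1 : N - 1 + 1 = N := by omega
  have e2 : N - 1 + 2 = N + 1 := by omega
  rw [e1] at hzN
  rw [e2, e1] at hzN1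
  have hccN1ne : SLaux.cc N f w β0 (N + 1) ≠ 0 :=
    SLaux.cc_ne N f w β0 (ne_of_gt hsβ) hf hw N le_rfl
  have hccNne : SLaux.cc N f w β0 N ≠ 0 := by
    have h := SLaux.cc_ne N f w β0 (ne_of_gt hsβ) hf hw (N - 1) (by omega)
    rwa [e1] at h
  have hccr : SLaux.cc N f w β0 (N + 1) = -(w 1 / f 0) * SLaux.cc N f w β0 N := by
    have h3 : N + 1 = (N - 1) + 2 := by omega
    rw [h3, SLaux.cc]
    have i1 : N - (N - 1) = 1 := by omega
    simp only [i1, e1]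
  choose Lf hLIlv hLeq using fun t => SLaux.pencil (k := N - 1) hIlv t
  simp only [e1] at hLeq
  have hnN1 : n ≤ N - 1 := by omega
  have keyE : ∀ α, Dv α ≠ 0 →
      nthEig (slCharPoly N f q w (sepA α) (sepB β0)) n = Lf (τv α) n := by
    intro α hDα
    have hreal : C (-(Real.cos α + f 0 * Real.sin α)) * SLaux.zch N f q w β0 (N + 1)
        + C (f 0 * Real.sin α) * SLaux.zch N f q w β0 N
        = C (-(Dv α) * SLaux.cc N f w β0 (N + 1)) * SLaux.Pr N (Lf (τv α)) := by
      rw [hzN1, hzN, ← hLeq (τv α)]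
      have hA : C (-(Real.cos α + f 0 * Real.sin α)) * C (SLaux.cc N f w β0 (N + 1))
          = C (-(Dv α) * SLaux.cc N f w β0 (N + 1)) := by
        rw [← C_mul]
      have hB : C (f 0 * Real.sin α) * C (SLaux.cc N f w β0 N)
          = -(C (-(Dv α) * SLaux.cc N f w β0 (N + 1)) * C (τv α)) := by
        rw [← C_mul, ← C_mul, ← C_neg]
        congr 1
        rw [hccr, hτv]
        simp only
        field_simp
      linear_combination SLaux.Pr N ν * hA + SLaux.Pr (N - 1) μ * hB
    have hΓ : slCharPoly N f q w (sepA α) (sepB β0)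
        = C ((-(Dv α) * SLaux.cc N f w β0 (N + 1) : ℝ) : ℂ)
          * (SLaux.Pr N (Lf (τv α))).map (algebraMap ℝ ℂ) := by
      rw [SLaux.gammaEq N f q w β0 (by omega) hf α, hreal, Polynomial.map_mul,
        Polynomial.map_C]
      norm_num [Complex.coe_algebraMap]
    exact SLaux.nthEig_eq N (Lf (τv α))
      (fun i j hij hj => (hLIlv (τv α)).nu_mono j i hij (by omega)) _
      (by exact_mod_cast mul_ne_zero (neg_ne_zero.mpr hDα) hccN1ne) _ hΓ n hn
  have hD0 : Dv 0 = 1 := by rw [hDv]; simp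
  have hDpos : ∀ a, a ∈ Set.Ico 0 ξ → 0 < Dv a := by
    intro a ha
    rw [hDval a]
    exact div_pos (Real.sin_pos_of_pos_of_lt_pi (by linarith [ha.1, ha.2])
      (by linarith [ha.1, ha.2])) hsξ
  have hDneg : ∀ a, a ∈ Set.Ioo ξ Real.pi → Dv a < 0 := by
    intro a ha
    rw [hDval a]
    apply div_neg_of_neg_of_pos _ hsξ
    have hs : 0 < Real.sin (a - ξ) :=
      Real.sin_pos_of_pos_of_lt_pi (by linarith [ha.1, ha.2]) (by linarith [ha.1, ha.2])
    rw [show ξ - a = -(a - ξ) by ring, Real.sin_neg]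
    linarith
  have hτlt : ∀ a b, a < b → b - a < Real.pi → Dv a ≠ 0 → Dv b ≠ 0 →
      0 < Dv a * Dv b → τv b < τv a := by
    intro a b hab hπab hDa hDb hDD
    have hsin : 0 < Real.sin (b - a) :=
      Real.sin_pos_of_pos_of_lt_pi (by linarith) hπab
    have hkey : Real.sin b * Dv a - Real.sin a * Dv b = Real.sin (b - a) := by
      rw [hDv]
      simp only
      rw [Real.sin_sub]
      ring
    have hdiff : τv a - τv b = f 0 ^ 2 * Real.sin (b - a) / (w 1 * (Dv a * Dv b)) := by
      rw [hτv]
      simp only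
      rw [← hkey]
      field_simp
      ring
    have hpos : 0 < τv a - τv b := by
      rw [hdiff]
      exact div_pos (mul_pos hf0sq hsin) (mul_pos hw1 hDD)
    linarith
  have hLmonoT : ∀ s t, s < t → Lf s n < Lf t n := by
    intro s t hst
    have hxlow : ∀ j, j < n → μ j < Lf s n := fun j hj =>
      (hLIlv s).mu_lt_nu j n hj hnN1 (by omega)
    have hxhigh : ∀ j, n ≤ j → j < N - 1 → Lf s n < μ j := fun j h1 h2 =>
      (hLIlv s).nu_lt_mu n j h1 h2
    have hroot : (SLaux.Pr N (Lf s)).eval (Lf s n) = 0 := by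
      rw [SLaux.Pr_eval]
      exact Finset.prod_eq_zero (Finset.mem_range.mpr hn) (by simp)
    have hFt : (SLaux.Pr N (Lf t)).eval (Lf s n)
        = -(t - s) * (SLaux.Pr (N - 1) μ).eval (Lf s n) := by
      have h1 := congrArg (Polynomial.eval (Lf s n)) (hLeq t)
      have h2 := congrArg (Polynomial.eval (Lf s n)) (hLeq s)
      simp only [eval_sub, eval_mul, eval_C] at h1 h2
      rw [hroot] at h2
      linear_combination h2 - h1
    have hPμ : 0 < (-1 : ℝ) ^ (N - 1 - n) * (SLaux.Pr (N - 1) μ).eval (Lf s n) := by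
      rw [SLaux.Pr_eval]
      exact SLaux.eval_sign hnN1 μ _ hxlow hxhigh
    have hsgn : 0 < (-1 : ℝ) ^ ((N - 1) - n + 1) * (SLaux.Pr N (Lf t)).eval (Lf s n) := by
      rw [hFt, pow_succ]
      have hr : (-1 : ℝ) ^ (N - 1 - n) * -1 *
          (-(t - s) * (SLaux.Pr (N - 1) μ).eval (Lf s n))
          = (t - s) * ((-1 : ℝ) ^ (N - 1 - n) * (SLaux.Pr (N - 1) μ).eval (Lf s n)) := by
        ring
      rw [hr]
      exact mul_pos (by linarith) hPμ
    have hss := (SLaux.slot_sign (hLIlv t) hnN1 hxlow hxhigh).2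
    rw [e1] at hss
    exact hss hsgn
  have hLcont : ∀ ε, 0 < ε → ∃ δ, 0 < δ ∧ ∀ t, 0 < t → t < δ → Lf t n < Lf 0 n + ε := by
    intro ε hε
    set x0 := Lf 0 n with hx0
    have hx0mun : n < N - 1 → x0 < μ n := fun h => ((hLIlv 0) n h).1
    set xp := if h : n + 1 < N then min (x0 + ε) ((x0 + μ n) / 2) else x0 + ε with hxp
    have hxpgt : x0 < xp := by
      rw [hxp]
      split_ifs with h
      · refine lt_min (by linarith) ?_
        have := hx0mun (by omega)
        linarith
      · linarith
    have hxple : xp ≤ x0 + ε := by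
      rw [hxp]
      split_ifs with h
      · exact min_le_left _ _
      · exact le_refl _
    have hxpmu : ∀ j, n ≤ j → j < N - 1 → xp < μ j := by
      intro j h1 h2
      have hn1 : n + 1 < N := by omega
      have hxm : xp ≤ (x0 + μ n) / 2 := by
        rw [hxp, dif_pos hn1]
        exact min_le_right _ _
      have h3 : x0 < μ n := hx0mun (by omega)
      have h4 : μ n ≤ μ j := by
        rcases eq_or_lt_of_le h1 with rfl | h5
        · exact le_refl _
        · exact (hIlv.mu_mono n j h5 h2).le
      have : xp < μ n := by linarith
      linarith
    have hxlow : ∀ j, j < n → μ j < xp := by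
      intro j hj
      have : μ j < x0 := (hLIlv 0).mu_lt_nu j n hj hnN1 (by omega)
      linarith
    have hLmono0 : ∀ i j, i < j → j < N → Lf 0 i < Lf 0 j := fun i j hij hj =>
      (hLIlv 0).nu_mono j i hij (by omega)
    have hq : 0 < (-1 : ℝ) ^ (N - 1 - n) * (SLaux.Pr N (Lf 0)).eval xp := by
      rw [SLaux.Pr_eval]
      have hh1 : ∀ i, i < n + 1 → Lf 0 i < xp := by
        intro i hi
        rcases Nat.lt_or_ge i n with h | h
        · have := hLmono0 i n h hn
          linarith
        · have hieq : i = n := by omega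
          subst hieq
          exact hxpgt
      have hh2 : ∀ i, n + 1 ≤ i → i < N → xp < Lf 0 i := by
        intro i hi1 hi2
        have hμi : μ (i - 1) < Lf 0 i := by
          have h3 := ((hLIlv 0) (i - 1) (by omega)).2
          rw [show i - 1 + 1 = i by omega] at h3
          exact h3
        have h4 : xp < μ (i - 1) := hxpmu (i - 1) (by omega) (by omega)
        linarith
      have := SLaux.eval_sign (k := N) (j := n + 1) (by omega) (Lf 0) xp hh1 hh2
      rwa [show N - (n + 1) = N - 1 - n by omega] at this
    set Pm := (SLaux.Pr (N - 1) μ).eval xp with hPm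
    refine ⟨((-1 : ℝ) ^ (N - 1 - n) * (SLaux.Pr N (Lf 0)).eval xp) / (|Pm| + 1),
      div_pos hq (by positivity), ?_⟩
    intro t ht htδ
    have hAbs : (0 : ℝ) < |Pm| + 1 := by positivity
    have hFt : (SLaux.Pr N (Lf t)).eval xp = (SLaux.Pr N (Lf 0)).eval xp - t * Pm := by
      have h1 := congrArg (Polynomial.eval xp) (hLeq t)
      have h2 := congrArg (Polynomial.eval xp) (hLeq 0)
      simp only [eval_sub, eval_mul, eval_C] at h1 h2
      rw [hPm]
      linear_combination h2 - h1
    have hsgn : 0 < (-1 : ℝ) ^ (N - 1 - n) * (SLaux.Pr N (Lf t)).eval xp := by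
      rw [hFt]
      have hb1 : (-1 : ℝ) ^ (N - 1 - n) * ((SLaux.Pr N (Lf 0)).eval xp - t * Pm)
          = (-1 : ℝ) ^ (N - 1 - n) * (SLaux.Pr N (Lf 0)).eval xp
            - t * ((-1 : ℝ) ^ (N - 1 - n) * Pm) := by ring
      rw [hb1]
      have h2a : (-1 : ℝ) ^ (N - 1 - n) * Pm ≤ |Pm| := by
        calc (-1 : ℝ) ^ (N - 1 - n) * Pm ≤ |(-1 : ℝ) ^ (N - 1 - n) * Pm| := le_abs_self _
          _ = |Pm| := by rw [abs_mul, abs_pow, abs_neg, abs_one, one_pow, one_mul]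
      have h2b : t * ((-1 : ℝ) ^ (N - 1 - n) * Pm) ≤ t * |Pm| :=
        mul_le_mul_of_nonneg_left h2a ht.le
      have h4 : t * (|Pm| + 1) < (-1 : ℝ) ^ (N - 1 - n) * (SLaux.Pr N (Lf 0)).eval xp :=
        (lt_div_iff₀ hAbs).mp htδ
      have h5 : t * (|Pm| + 1) = t * |Pm| + t := by ring
      linarith
    have hlt := (SLaux.slot_sign (hLIlv t) hnN1 hxlow hxpmu).1
    rw [e1] at hlt
    have := hlt hsgn
    linarith
  refine ⟨?_, ?_, ?_⟩
  · intro a ha b hb hab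
    show nthEig (slCharPoly N f q w (sepA b) (sepB β0)) n
      < nthEig (slCharPoly N f q w (sepA a) (sepB β0)) n
    rw [keyE b (ne_of_gt (hDpos b hb)), keyE a (ne_of_gt (hDpos a ha))]
    apply hLmonoT
    exact hτlt a b hab (by linarith [ha.1, hb.2]) (ne_of_gt (hDpos a ha))
      (ne_of_gt (hDpos b hb)) (mul_pos (hDpos a ha) (hDpos b hb))
  · intro a ha b hb hab
    show nthEig (slCharPoly N f q w (sepA b) (sepB β0)) n
      < nthEig (slCharPoly N f q w (sepA a) (sepB β0)) n
    rw [keyE b (ne_of_lt (hDneg b hb)), keyE a (ne_of_lt (hDneg a ha))]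
    apply hLmonoT
    exact hτlt a b hab (by linarith [ha.1, hb.2]) (ne_of_lt (hDneg a ha))
      (ne_of_lt (hDneg b hb)) (mul_pos_of_neg_of_neg (hDneg a ha) (hDneg b hb))
  · have hτ0 : τv 0 = 0 := by
      rw [hτv]
      simp
    have hkey0 : nthEig (slCharPoly N f q w (sepA 0) (sepB β0)) n = Lf 0 n := by
      rw [keyE 0 (by rw [hD0]; norm_num), hτ0]
    rw [hkey0]
    rw [Metric.tendsto_nhdsWithin_nhds]
    intro ε hε
    obtain ⟨δ1, hδ1, hδ1p⟩ := hLcont ε hε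
    have hτπ : τv Real.pi = 0 := by
      rw [hτv]
      simp
    have hcont : ContinuousAt τv Real.pi := by
      rw [hτv]
      apply ContinuousAt.div
      · fun_prop
      · fun_prop
      · rw [hDv]
        simp only [Real.cos_pi, Real.sin_pi, mul_zero, add_zero]
        simp [hw1']
    have htd := hcont.tendsto
    rw [hτπ] at htd
    obtain ⟨δ2, hδ2, hδ2p⟩ := Metric.tendsto_nhds_nhds.mp htd δ1 hδ1
    refine ⟨min δ2 (Real.pi - ξ), lt_min hδ2 (by linarith), ?_⟩
    intro x hx hdist
    have hd2 : dist x Real.pi < δ2 := lt_of_lt_of_le hdist (min_le_left _ _)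
    have hdξ : dist x Real.pi < Real.pi - ξ := lt_of_lt_of_le hdist (min_le_right _ _)
    have hxπ : x < Real.pi := hx
    have hxξ : ξ < x := by
      rw [Real.dist_eq] at hdξ
      have := abs_lt.mp hdξ
      linarith [this.1]
    have hxI : x ∈ Set.Ioo ξ Real.pi := ⟨hxξ, hxπ⟩
    have hDx := hDneg x hxI
    show dist (nthEig (slCharPoly N f q w (sepA x) (sepB β0)) n) (Lf 0 n) < ε
    rw [keyE x (ne_of_lt hDx)]
    have hsx : 0 < Real.sin x := Real.sin_pos_of_pos_of_lt_pi (by linarith) hxπ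
    have hτpos : 0 < τv x := by
      rw [hτv]
      simp only
      apply div_pos_of_neg_of_neg
      · nlinarith
      · exact mul_neg_of_pos_of_neg hw1 hDx
    have hτd1 : τv x < δ1 := by
      have h6 := hδ2p hd2
      rw [Real.dist_eq, sub_zero] at h6
      calc τv x ≤ |τv x| := le_abs_self _
        _ < δ1 := h6
    have hup := hδ1p (τv x) hτpos hτd1
    have hlow := hLmonoT 0 (τv x) hτpos
    rw [Real.dist_eq, abs_lt]
    constructor <;> linarith
end
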